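/- arXiv:2311.09515 — 7 statements merged into one kernel-verified Lean document; each statement's English description precedes it below -/
import Mathlib

section
/- Let (X,d) be a complete metric space, let n ≥ 2, and let f₁,…,fₙ : X → X be maps such that each fᵢ is Lipschitz with constant sᵢ < 1, with s₁ ≤ s₂ ≤ … ≤ sₙ. Let γᵢ be the unique fixed point of fᵢ and let M = max_{i,j∈{1,…,n}} d(γᵢ,γⱼ). If A is a nonempty compact subset of X with A = ⋃ᵢ fᵢ(A), then A ⊆ (⋃_{i=1}^{n−1} B[γᵢ, M sᵢ (1+sₙ)/(1−s_{n−1} sₙ)]) ∪ B[γₙ, M sₙ (1+s_{n−1})/(1−s_{n−1} sₙ)], where B[x,r] = {y ∈ X : d(y,x) ≤ r} is the closed ball of center x and radius r. -/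
/-- (Theorem 3.1 of [locHBfrct].)  Let `(X,d)` be a complete metric
space, and `f₀, …, f_{n+1} : X → X` (that is, `n+2 ≥ 2` maps) with each `fᵢ`
Lipschitz with constant `sᵢ < 1` and `s₀ ≤ s₁ ≤ … ≤ s_{n+1}`.  Let `γᵢ` be the fixed
point of `fᵢ` and `M = maxᵢⱼ d(γᵢ, γⱼ)`.  If `A` is nonempty compact with
`A = ⋃ᵢ fᵢ(A)`, then `A` is covered by the closed balls
`B[γᵢ, M sᵢ (1+s_last)/(1 − s_secondlast s_last)]` for `i < n+1` together with
`B[γ_last, M s_last (1+s_secondlast)/(1 − s_secondlast s_last)]`. -/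
theorem attractor_subset_union_closedBalls
    {X : Type*} [MetricSpace X] [CompleteSpace X]
    (n : ℕ) (f : Fin (n + 2) → X → X) (s : Fin (n + 2) → ℝ)
    (hs : ∀ i, s i < 1)
    (hf : ∀ i, ∀ p q : X, dist (f i p) (f i q) ≤ s i * dist p q)
    (hmono : Monotone s)
    (γ : Fin (n + 2) → X) (hγ : ∀ i, f i (γ i) = γ i)
    (M : ℝ) (hM : M = ⨆ p : Fin (n + 2) × Fin (n + 2), dist (γ p.1) (γ p.2))
    (A : Set X) (hA : A.Nonempty) (hAc : IsCompact A)
    (hAfix : A = ⋃ i, f i '' A) :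
    A ⊆ (⋃ i : Fin (n + 1), Metric.closedBall (γ i.castSucc)
            (M * s i.castSucc * (1 + s (Fin.last (n + 1))) /
              (1 - s ((Fin.last n).castSucc) * s (Fin.last (n + 1))))) ∪
        Metric.closedBall (γ (Fin.last (n + 1)))
          (M * s (Fin.last (n + 1)) * (1 + s ((Fin.last n).castSucc)) /
            (1 - s ((Fin.last n).castSucc) * s (Fin.last (n + 1)))) := by
  rcases subsingleton_or_nontrivial X with hX | hX
  · -- degenerate case: X is a subsingleton
    intro x hx
    have hM0 : M = 0 := by
      rw [hM]
      have : ∀ p : Fin (n + 2) × Fin (n + 2), dist (γ p.1) (γ p.2) = 0 := by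
        intro p; rw [Subsingleton.elim (γ p.1) (γ p.2), dist_self]
      calc (⨆ p : Fin (n + 2) × Fin (n + 2), dist (γ p.1) (γ p.2))
          = ⨆ _ : Fin (n + 2) × Fin (n + 2), (0:ℝ) := by
            congr 1; funext p; exact this p
        _ = 0 := ciSup_const
    refine Or.inr ?_
    rw [Metric.mem_closedBall, Subsingleton.elim x (γ (Fin.last (n+1))), dist_self, hM0]
    simp
  -- main case
  have hs0 : ∀ i, 0 ≤ s i := by
    intro i
    obtain ⟨p, q, hpq⟩ := exists_pair_ne X
    have h1 := hf i p q
    have h2 : 0 < dist p q := dist_pos.2 hpq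
    nlinarith [dist_nonneg (x := f i p) (y := f i q)]
  set N : Fin (n + 2) := Fin.last (n + 1) with hN
  set N' : Fin (n + 2) := (Fin.last n).castSucc with hN'
  have hN'N : N' ≠ N := by
    simp [hN, hN', Fin.ext_iff]
  have hsNN' : s N' ≤ s N := hmono (Fin.castSucc_lt_last _).le
  have hMb : ∀ a b, dist (γ a) (γ b) ≤ M := by
    intro a b
    rw [hM]
    exact le_ciSup (f := fun p : Fin (n + 2) × Fin (n + 2) => dist (γ p.1) (γ p.2))
      (Set.Finite.bddAbove (Set.finite_range _)) (a, b)
  have hM0 : 0 ≤ M := by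
    have := hMb 0 0
    rw [dist_self] at this
    exact this
  have hD : 0 < 1 - s N' * s N := by nlinarith [hs0 N', hs0 N, hs N', hs N]
  set R : Fin (n + 2) → ℝ := fun k =>
    if k = N then M * s N * (1 + s N') / (1 - s N' * s N)
    else M * s k * (1 + s N) / (1 - s N' * s N) with hRdef
  have hRval_N : R N = M * s N * (1 + s N') / (1 - s N' * s N) := by simp [hRdef]
  have hRval : ∀ k, k ≠ N → R k = M * s k * (1 + s N) / (1 - s N' * s N) := by
    intro k hk; simp [hRdef, hk]
  have hR0 : ∀ k, 0 ≤ R k := by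
    intro k
    by_cases hk : k = N
    · rw [hk, hRval_N]
      apply div_nonneg _ hD.le
      exact mul_nonneg (mul_nonneg hM0 (hs0 N)) (by linarith [hs0 N'])
    · rw [hRval k hk]
      apply div_nonneg _ hD.le
      exact mul_nonneg (mul_nonneg hM0 (hs0 k)) (by linarith [hs0 N])
  have hkN' : ∀ k : Fin (n + 2), k ≠ N → s k ≤ s N' := by
    intro k hk
    apply hmono
    have h1 : (k : ℕ) < n + 2 := k.isLt
    have h2 : (k : ℕ) ≠ n + 1 := by
      intro h; apply hk; apply Fin.ext; simpa [hN] using h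
    rw [Fin.le_def]
    simp only [hN', Fin.coe_castSucc, Fin.val_last]
    omega
  have hRmono : ∀ k, k ≠ N → R k ≤ R N' := by
    intro k hk
    rw [hRval k hk, hRval N' hN'N]
    apply div_le_div_of_nonneg_right _ hD.le
    exact mul_le_mul_of_nonneg_right
      (mul_le_mul_of_nonneg_left (hkN' k hk) hM0) (by linarith [hs0 N])
  -- key radius identities / inequalities
  have key1 : ∀ k, k ≠ N → s k * (R N + M) = R k := by
    intro k hk
    rw [hRval_N, hRval k hk]
    field_simp [hD.ne', show 1 - s N * s N' ≠ 0 by rw [mul_comm]; exact hD.ne']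
    ring
  have key2 : ∀ k, k ≠ N → s k * (R N' + M) ≤ R k := by
    intro k hk
    rw [hRval N' hN'N, hRval k hk]
    have heq : s k * (M * s N' * (1 + s N) / (1 - s N' * s N) + M)
        = M * s k * (1 + s N') / (1 - s N' * s N) := by
      field_simp; ring
    rw [heq]
    apply div_le_div_of_nonneg_right _ hD.le
    exact mul_le_mul_of_nonneg_left (by linarith) (mul_nonneg hM0 (hs0 k))
  have key3 : s N * (R N' + M) = R N := by
    rw [hRval N' hN'N, hRval_N]
    field_simp [hD.ne', show 1 - s N * s N' ≠ 0 by rw [mul_comm]; exact hD.ne']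
    ring
  -- the functional φ and its sup E over A
  set φ : X → ℝ := fun x =>
    Finset.univ.inf' Finset.univ_nonempty (fun i : Fin (n + 2) => dist x (γ i) - R i)
    with hφdef
  have hφ_le : ∀ x i, φ x ≤ dist x (γ i) - R i := by
    intro x i
    exact Finset.inf'_le _ (Finset.mem_univ i)
  have hφ_ex : ∀ x : X, ∃ i, φ x = dist x (γ i) - R i := by
    intro x
    obtain ⟨i, _, h⟩ := Finset.exists_mem_eq_inf' (Finset.univ_nonempty)
      (fun i : Fin (n + 2) => dist x (γ i) - R i)
    exact ⟨i, h⟩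
  obtain ⟨C, hC⟩ : ∃ C, ∀ x ∈ A, dist x (γ N) ≤ C := by
    obtain ⟨r, hr⟩ := (Metric.isBounded_iff_subset_closedBall (γ N)).1 hAc.isBounded
    exact ⟨r, fun x hx => hr hx⟩
  set E : ℝ := sSup (φ '' A) with hEdef
  have hbdd : BddAbove (φ '' A) := by
    refine ⟨C - R N, ?_⟩
    rintro _ ⟨x, hx, rfl⟩
    have := hφ_le x N
    have := hC x hx
    linarith
  have hφE : ∀ x ∈ A, φ x ≤ E := fun x hx => le_csSup hbdd ⟨x, hx, rfl⟩
  have hpre : ∀ x ∈ A, ∃ i y, y ∈ A ∧ f i y = x := by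
    intro x hx
    rw [hAfix] at hx
    simp only [Set.mem_iUnion, Set.mem_image] at hx
    obtain ⟨i, y, hy, hfy⟩ := hx
    exact ⟨i, y, hy, hfy⟩
  -- main contraction estimate
  have main : ∀ x ∈ A, φ x ≤ s N * max E 0 := by
    intro x hx
    obtain ⟨i, y, hy, hfy⟩ := hpre x hx
    obtain ⟨k, hk⟩ := hφ_ex y
    have hyk : dist y (γ k) ≤ E + R k := by
      have h := hφE y hy
      rw [hk] at h
      linarith
    have hstep : dist x (γ i) ≤ s i * dist y (γ i) := by
      calc dist x (γ i) = dist (f i y) (f i (γ i)) := by rw [hfy, hγ i]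
        _ ≤ s i * dist y (γ i) := hf i y (γ i)
    have hEmax : E ≤ max E 0 := le_max_left _ _
    have h0max : (0:ℝ) ≤ max E 0 := le_max_right _ _
    have hsiN : s i ≤ s N := hmono (Fin.le_last i)
    have htri : dist y (γ i) ≤ dist y (γ k) + M :=
      le_trans (dist_triangle y (γ k) (γ i)) (by linarith [hMb k i])
    by_cases hiN : i = N
    · subst hiN
      by_cases hkN : k = N
      · subst hkN
        have h1 := hφ_le x N
        have h2 : dist x (γ N) ≤ s N * (E + R N) := by
          calc dist x (γ N) ≤ s N * dist y (γ N) := hstep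
            _ ≤ s N * (E + R N) := by
                apply mul_le_mul_of_nonneg_left hyk (hs0 N)
        have h3 : s N * E ≤ s N * max E 0 :=
          mul_le_mul_of_nonneg_left hEmax (hs0 N)
        nlinarith [hs N, hR0 N]
      · have hRk : R k ≤ R N' := hRmono k hkN
        have h2 : dist x (γ N) ≤ s N * (E + (R N' + M)) := by
          calc dist x (γ N) ≤ s N * dist y (γ N) := hstep
            _ ≤ s N * (E + (R N' + M)) := by
                apply mul_le_mul_of_nonneg_left _ (hs0 N)
                linarith
        have h1 := hφ_le x N
        have h3 : s N * E ≤ s N * max E 0 :=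
          mul_le_mul_of_nonneg_left hEmax (hs0 N)
        nlinarith [key3]
    · by_cases hkN : k = N
      · subst hkN
        have h2 : dist x (γ i) ≤ s i * (E + (R N + M)) := by
          calc dist x (γ i) ≤ s i * dist y (γ i) := hstep
            _ ≤ s i * (E + (R N + M)) := by
                apply mul_le_mul_of_nonneg_left _ (hs0 i)
                linarith
        have h1 := hφ_le x i
        have h3 : s i * E ≤ s i * max E 0 :=
          mul_le_mul_of_nonneg_left hEmax (hs0 i)
        have h4 : s i * max E 0 ≤ s N * max E 0 :=
          mul_le_mul_of_nonneg_right hsiN h0max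
        nlinarith [key1 i hiN]
      · have hRk : R k ≤ R N' := hRmono k hkN
        have h2 : dist x (γ i) ≤ s i * (E + (R N' + M)) := by
          calc dist x (γ i) ≤ s i * dist y (γ i) := hstep
            _ ≤ s i * (E + (R N' + M)) := by
                apply mul_le_mul_of_nonneg_left _ (hs0 i)
                linarith
        have h1 := hφ_le x i
        have h3 : s i * E ≤ s i * max E 0 :=
          mul_le_mul_of_nonneg_left hEmax (hs0 i)
        have h4 : s i * max E 0 ≤ s N * max E 0 :=
          mul_le_mul_of_nonneg_right hsiN h0max
        nlinarith [key2 i hiN]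
  have hE_le : E ≤ s N * max E 0 := by
    apply csSup_le (hA.image φ)
    rintro _ ⟨x, hx, rfl⟩
    exact main x hx
  have hE0 : E ≤ 0 := by
    rcases le_or_gt E 0 with h | h
    · exact h
    · exfalso
      rw [max_eq_left h.le] at hE_le
      nlinarith [hs N]
  -- conclusion
  intro x hx
  obtain ⟨i, hi⟩ := hφ_ex x
  have hxi : dist x (γ i) ≤ R i := by
    have h := hφE x hx
    rw [hi] at h
    linarith
  by_cases hiN : i = N
  · subst hiN
    refine Or.inr ?_
    rw [Metric.mem_closedBall]
    rw [hRval_N] at hxi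
    exact hxi
  · refine Or.inl ?_
    have hlt : (i : ℕ) < n + 1 := by
      have h1 : (i : ℕ) < n + 2 := i.isLt
      have h2 : (i : ℕ) ≠ n + 1 := by
        intro h; apply hiN; apply Fin.ext; simpa [hN] using h
      omega
    refine Set.mem_iUnion.2 ⟨⟨(i : ℕ), hlt⟩, ?_⟩
    have hcast : (⟨(i : ℕ), hlt⟩ : Fin (n + 1)).castSucc = i := by
      apply Fin.ext; simp
    rw [Metric.mem_closedBall, hcast]
    rw [hRval i hiN] at hxi
    exact hxi
end

section
/- Let θ > 0 and let a, c, d ∈ ℝ with a ≥ 0, d > 0 and c > 0. Then sup { (a − θc − θ d t)/(1 − θ t) : t ∈ ℝ, t ≤ −c/d } equals a d/(d + θ c) if a − θc > d, and equals d if a − θc ≤ d. -/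
/-- For `θ > 0`, `a ≥ 0`, `d > 0`, `c > 0`:
`sup { (a − θc − θ d t)/(1 − θ t) : t ≤ −c/d }` equals `a d/(d + θ c)` if
`a − θc > d`, and equals `d` if `a − θc ≤ d`. -/
theorem sup_N3_eq
    (θ a c d : ℝ) (hθ : 0 < θ) (ha : 0 ≤ a) (hd : 0 < d) (hc : 0 < c) :
    sSup {y : ℝ | ∃ t : ℝ, t ≤ -c / d ∧ y = (a - θ * c - θ * d * t) / (1 - θ * t)} =
      if a - θ * c ≤ d then d else a * d / (d + θ * c) := by
  have hcd : -c / d < 0 := div_neg_of_neg_of_pos (neg_neg_of_pos hc) hd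
  have hden : ∀ t : ℝ, t ≤ -c / d → 0 < 1 - θ * t := by
    intro t ht
    have ht0 : t < 0 := lt_of_le_of_lt ht hcd
    nlinarith
  have hrw : ∀ t : ℝ, t ≤ -c / d →
      (a - θ * c - θ * d * t) / (1 - θ * t) = d + (a - θ * c - d) / (1 - θ * t) := by
    intro t ht
    have h := hden t ht
    field_simp
    ring
  by_cases h : a - θ * c ≤ d
  · simp only [if_pos h]
    apply IsLUB.csSup_eq
    · constructor
      · rintro y ⟨t, ht, rfl⟩
        rw [hrw t ht]
        have := hden t ht
        have : (a - θ * c - d) / (1 - θ * t) ≤ 0 :=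
          div_nonpos_of_nonpos_of_nonneg (by linarith) (by linarith)
        linarith
      · intro b hb
        by_contra hbd
        push_neg at hbd
        set k := d - (a - θ * c) with hk
        set δ := d - b with hδ
        have hk0 : 0 ≤ k := by simp [hk]; linarith
        have hδ0 : 0 < δ := by simp [hδ]; linarith
        set t₀ := min (-c / d) ((1 - k / δ) / θ - 1) with ht₀
        have ht0le : t₀ ≤ -c / d := min_le_left _ _
        have hdent : k / δ < 1 - θ * t₀ := by
          have h1 : t₀ ≤ (1 - k / δ) / θ - 1 := min_le_right _ _
          have h2 : θ * t₀ ≤ 1 - k / δ - θ := by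
            have := mul_le_mul_of_nonneg_left h1 hθ.le
            rw [mul_sub, mul_div_cancel₀ _ hθ.ne'] at this
            linarith
          linarith
        have hdpos := hden t₀ ht0le
        have hmem : (a - θ * c - θ * d * t₀) / (1 - θ * t₀) ∈
            {y : ℝ | ∃ t : ℝ, t ≤ -c / d ∧ y = (a - θ * c - θ * d * t) / (1 - θ * t)} :=
          ⟨t₀, ht0le, rfl⟩
        have hle := hb hmem
        rw [hrw t₀ ht0le] at hle
        have hsmall : k / (1 - θ * t₀) < δ := by
          rw [div_lt_iff₀ hdpos]
          nlinarith [mul_div_cancel₀ k hδ0.ne']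
        have : (a - θ * c - d) / (1 - θ * t₀) = -(k / (1 - θ * t₀)) := by
          rw [hk]; ring
        rw [this] at hle
        linarith
    · exact ⟨_, ⟨-c / d, le_refl _, rfl⟩⟩
  · simp only [if_neg h]
    push_neg at h
    apply IsGreatest.csSup_eq
    constructor
    · refine ⟨-c / d, le_refl _, ?_⟩
      have hsum : (0:ℝ) < d + θ * c := by positivity
      field_simp
      rw [show d - -(θ * c) = d + θ * c by ring, mul_div_cancel_left₀ _ hsum.ne']
      ring
    · rintro y ⟨t, ht, rfl⟩
      rw [hrw t ht]
      have hd1 : (0:ℝ) < 1 + θ * c / d := by positivity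
      have h2 : 1 + θ * c / d ≤ 1 - θ * t := by
        have h1 := mul_le_mul_of_nonneg_left ht hθ.le
        have h2 : θ * (-c / d) = -(θ * c / d) := by ring
        linarith
      have h3 : (a - θ * c - d) / (1 - θ * t) ≤ (a - θ * c - d) / (1 + θ * c / d) :=
        div_le_div_of_nonneg_left (by linarith) hd1 h2
      have h4 : d + (a - θ * c - d) / (1 + θ * c / d) = a * d / (d + θ * c) := by
        have hsum : (0:ℝ) < d + θ * c := by positivity
        field_simp
        ring
      linarith
end

section
/- In the affine FIF framework with n ≥ 2 interpolation points x₀ < … < xₙ and scaling factors d_k ∈ [0,1), there exists a continuous function f : [x₀, xₙ] → ℝ such that f(x_k) = y_k for all k ∈ {0,1,…,n} and whose graph G_f = {(x, f(x)) : x ∈ [x₀,xₙ]} satisfies G_f = ⋃_{k=1}^{n} f_k(G_f); that is, G_f is the attractor of the iterated function system (f₁,…,fₙ) on ℝ². -/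
/-- Glue a sequence of pieces `P k` along thresholds `X`. -/
noncomputable def fifGlue (P : ℕ → ℝ → ℝ) (X : ℕ → ℝ) : ℕ → ℝ → ℝ
  | 0 => P 0
  | (k+1) => fun s => if s ≤ X (k+1) then fifGlue P X k s else P (k+1) s

theorem fifGlue_eq_of_ge (P : ℕ → ℝ → ℝ) (X : ℕ → ℝ) (mono : Monotone X)
    (hm : ∀ k < m, P k (X (k+1)) = P (k+1) (X (k+1))) :
    ∀ s, X m ≤ s → fifGlue P X m s = P m s := by
  induction m with
  | zero => intro s _; rfl
  | succ m ih =>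
    intro s hs
    rw [fifGlue]
    dsimp only
    split_ifs with h
    · have hse : s = X (m+1) := le_antisymm h hs
      rw [ih (fun k hk => hm k (by omega)) s (hse ▸ mono (Nat.le_succ m)), hse,
        hm m (Nat.lt_succ_self m)]
    · rfl

theorem fifGlue_continuous (P : ℕ → ℝ → ℝ) (X : ℕ → ℝ) (mono : Monotone X)
    (hm : ∀ k < m, P k (X (k+1)) = P (k+1) (X (k+1)))
    (hP : ∀ k ≤ m, Continuous (P k)) : Continuous (fifGlue P X m) := by
  induction m with
  | zero => exact hP 0 le_rfl
  | succ m ih =>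
    rw [fifGlue]
    refine Continuous.if_le (ih (fun k hk => hm k (by omega)) (fun k hk => hP k (by omega)))
      (hP (m+1) le_rfl) continuous_id continuous_const ?_
    intro s hs
    subst hs
    rw [fifGlue_eq_of_ge P X mono (fun k hk => hm k (by omega)) _ (mono (Nat.le_succ m)),
      hm m (Nat.lt_succ_self m)]

theorem fifGlue_eq_of_mem (P : ℕ → ℝ → ℝ) (X : ℕ → ℝ) (mono : Monotone X)
    (hm : ∀ k < m, P k (X (k+1)) = P (k+1) (X (k+1)))
    {j s} (hj : j ≤ m) (h1 : X j ≤ s) (h2 : s ≤ X (j+1)) :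
    fifGlue P X m s = P j s := by
  induction m with
  | zero => interval_cases j; rfl
  | succ m ih =>
    rcases Nat.lt_or_ge j (m+1) with hj' | hj'
    · rw [fifGlue]
      dsimp only
      rw [if_pos (h2.trans (mono hj'))]
      exact ih (fun k hk => hm k (by omega)) (by omega)
    · have : j = m + 1 := by omega
      subst this
      exact fifGlue_eq_of_ge P X mono hm s h1

theorem fifGlue_dist (P Q : ℕ → ℝ → ℝ) (X : ℕ → ℝ) {C : ℝ}
    (h : ∀ k s, |P k s - Q k s| ≤ C) : ∀ m s, |fifGlue P X m s - fifGlue Q X m s| ≤ C := by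
  intro m
  induction m with
  | zero => exact h 0
  | succ m ih =>
    intro s
    rw [fifGlue, fifGlue]
    dsimp only
    split_ifs
    · exact ih s
    · exact h (m+1) s

theorem fif_exists_interval (X : ℕ → ℝ) {s : ℝ} :
    ∀ m, 0 < m → X 0 ≤ s → s ≤ X m → ∃ j, j < m ∧ X j ≤ s ∧ s ≤ X (j+1) := by
  intro m
  induction m with
  | zero => omega
  | succ m ih =>
    intro _ h1 h2
    rcases Nat.eq_zero_or_pos m with hm | hm
    · subst hm
      exact ⟨0, by omega, h1, h2⟩
    rcases le_or_gt s (X m) with h | h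
    · obtain ⟨j, hj, hj1, hj2⟩ := ih hm h1 h
      exact ⟨j, by omega, hj1, hj2⟩
    · exact ⟨m, by omega, h.le, h2⟩



/-- In the affine FIF framework with `n + 2 ≥ 2` maps, there exists
a continuous function `g : [x₀, x_N] → ℝ` interpolating the data (`g(x_k) = y_k` for
all `k`) whose graph `G = {(t, g t) : t ∈ [x₀, x_N]}` satisfies
`G = ⋃_k f_k(G)`, i.e. `G` is the attractor of the IFS `(f_k)_k`. -/
theorem fif_exists
    (n : ℕ) (x y : Fin (n + 3) → ℝ) (hx : StrictMono x)
    (d : Fin (n + 2) → ℝ) (hd : ∀ k, 0 ≤ d k ∧ d k < 1)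
    (a b c e : Fin (n + 2) → ℝ)
    (ha : ∀ k, a k = (x k.succ - x k.castSucc) / (x (Fin.last (n + 2)) - x 0))
    (hb : ∀ k, b k = (x (Fin.last (n + 2)) * x k.castSucc - x 0 * x k.succ) /
        (x (Fin.last (n + 2)) - x 0))
    (hc : ∀ k, c k = (y k.succ - y k.castSucc) / (x (Fin.last (n + 2)) - x 0) -
        d k * (y (Fin.last (n + 2)) - y 0) / (x (Fin.last (n + 2)) - x 0))
    (he : ∀ k, e k = (x (Fin.last (n + 2)) * y k.castSucc - x 0 * y k.succ) /
        (x (Fin.last (n + 2)) - x 0) -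
        d k * (x (Fin.last (n + 2)) * y 0 - x 0 * y (Fin.last (n + 2))) /
        (x (Fin.last (n + 2)) - x 0))
    (f : Fin (n + 2) → ℝ × ℝ → ℝ × ℝ)
    (hf : ∀ k (p : ℝ × ℝ), f k p = (a k * p.1 + b k, c k * p.1 + d k * p.2 + e k)) :
    ∃ g : ℝ → ℝ,
      ContinuousOn g (Set.Icc (x 0) (x (Fin.last (n + 2)))) ∧
      (∀ k : Fin (n + 3), g (x k) = y k) ∧
      (fun t => (t, g t)) '' Set.Icc (x 0) (x (Fin.last (n + 2))) =
        ⋃ k, f k '' ((fun t => (t, g t)) '' Set.Icc (x 0) (x (Fin.last (n + 2)))) := by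
  classical
  set A := x 0 with hA
  set B := x (Fin.last (n + 2)) with hB
  set yN := y (Fin.last (n + 2)) with hyN
  have hAB : A < B := hx (by first | (simp [Fin.lt_def]; omega) | simp [Fin.lt_def] | omega)
  have hdne : B - A ≠ 0 := by linarith
  -- basic algebraic identities
  have hapos : ∀ k, 0 < a k := by
    intro k
    rw [ha]
    exact div_pos (sub_pos.2 (hx (Fin.castSucc_lt_succ : k.castSucc < k.succ))) (by linarith)
  have hLA : ∀ k, a k * A + b k = x k.castSucc := by
    intro k; rw [ha, hb]; field_simp; ring
  have hLB : ∀ k, a k * B + b k = x k.succ := by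
    intro k; rw [ha, hb]; field_simp; ring
  have hVA : ∀ k, c k * A + d k * y 0 + e k = y k.castSucc := by
    intro k; rw [hc, he]; field_simp; ring
  have hVB : ∀ k, c k * B + d k * yN + e k = y k.succ := by
    intro k; rw [hc, he]; field_simp; ring
  set ℓ : Fin (n + 2) → ℝ → ℝ := fun k s => (s - b k) / a k with hℓ
  have hinv1 : ∀ k t, ℓ k (a k * t + b k) = t := by
    intro k t
    have := (hapos k).ne'
    simp only [hℓ]
    field_simp
    ring
  have hinv2 : ∀ k s, a k * ℓ k s + b k = s := by
    intro k s
    have := (hapos k).ne'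
    simp only [hℓ]
    field_simp
    ring
  -- the natural-number reindexings
  set km : ℕ → Fin (n + 2) := fun i => ⟨min i (n + 1), by omega⟩ with hkmdef
  have hkm : ∀ k : Fin (n + 2), km k.val = k := by
    intro k
    exact Fin.ext (by first | (simp [hkmdef]; omega) | simp [hkmdef] | omega)
  set X : ℕ → ℝ := fun i => x ⟨min i (n + 2), by omega⟩ with hXdef
  have hXmono : Monotone X := by
    intro i j hij
    exact hx.monotone (by first | (simp [Fin.le_def]; omega) | simp [Fin.le_def] | omega)
  have hXc : ∀ k : Fin (n + 2), X k.val = x k.castSucc := by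
    intro k
    have : (⟨min k.val (n+2), by omega⟩ : Fin (n+3)) = k.castSucc :=
      Fin.ext (by first | (simp; omega) | simp | omega)
    simp only [hXdef, this]
  have hXs : ∀ k : Fin (n + 2), X (k.val + 1) = x k.succ := by
    intro k
    have : (⟨min (k.val+1) (n+2), by omega⟩ : Fin (n+3)) = k.succ :=
      Fin.ext (by first | (simp [Fin.val_succ]; omega) | simp [Fin.val_succ] | omega)
    simp only [hXdef, this]
  have hX0 : X 0 = A := by
    have : (⟨min 0 (n+2), by omega⟩ : Fin (n+3)) = 0 := Fin.ext (by simp)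
    simp only [hXdef, this, hA]
  have hXtop : X (n + 2) = B := by
    have : (⟨min (n+2) (n+2), by omega⟩ : Fin (n+3)) = Fin.last (n+2) :=
      Fin.ext (by simp)
    simp only [hXdef, this, hB]
  -- clamping to [A, B]
  set clamp : ℝ → ℝ := fun s => max A (min s B) with hclampdef
  have hclamp_mem : ∀ s, clamp s ∈ Set.Icc A B :=
    fun s => ⟨le_max_left _ _, max_le hAB.le (min_le_right _ _)⟩
  have hclamp_id : ∀ s ∈ Set.Icc A B, clamp s = s := by
    rintro s ⟨h1, h2⟩
    simp only [hclampdef]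
    rw [min_eq_left h2, max_eq_right h1]
  have hclamp_cont : Continuous clamp :=
    continuous_const.max (continuous_id.min continuous_const)
  -- the pieces and the operator
  set P : (ℝ → ℝ) → ℕ → ℝ → ℝ := fun g k s =>
    c (km k) * ℓ (km k) s + d (km k) * g (ℓ (km k) s) + e (km k) with hPdef
  set T0 : (ℝ → ℝ) → ℝ → ℝ := fun g s => fifGlue (P g) X (n + 1) (clamp s) with hT0def
  have hPcont : ∀ (g : ℝ → ℝ), Continuous g → ∀ k, Continuous (P g k) := by
    intro g hg k
    have hl : Continuous (ℓ (km k)) := by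
      simp only [hℓ]
      exact (continuous_id.sub continuous_const).div_const _
    exact ((continuous_const.mul hl).add (continuous_const.mul (hg.comp hl))).add
      continuous_const
  have hmatch : ∀ (g : ℝ → ℝ), g A = y 0 → g B = yN →
      ∀ k < n + 1, P g k (X (k + 1)) = P g (k + 1) (X (k + 1))  := by
    intro g hgA hgB k hk
    have h1 : X (k + 1) = x (km k).succ := by
      rw [← hXs (km k)]
      congr 1
      first | (simp [hkmdef]; omega) | simp [hkmdef] | omega
    have h2 : X (k + 1) = x (km (k+1)).castSucc := by
      rw [← hXc (km (k+1))]
      congr 1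
      first | (simp [hkmdef]; omega) | simp [hkmdef] | omega
    have e1 : ℓ (km k) (X (k+1)) = B := by rw [h1, ← hLB (km k), hinv1]
    have e2 : ℓ (km (k+1)) (X (k+1)) = A := by rw [h2, ← hLA (km (k+1)), hinv1]
    simp only [hPdef, e1, e2, hgA, hgB]
    rw [hVB, hVA]
    congr 1
    exact Fin.ext (by first | (simp [hkmdef]; omega) | simp [hkmdef] | omega)
  have hT0cont : ∀ (g : ℝ → ℝ), Continuous g → g A = y 0 → g B = yN →
      Continuous (T0 g) := by
    intro g hg hgA hgB
    exact (fifGlue_continuous (P g) X hXmono (hmatch g hgA hgB)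
      (fun k _ => hPcont g hg k)).comp hclamp_cont
  have hT0A : ∀ (g : ℝ → ℝ), g A = y 0 → g B = yN → T0 g A = y 0 := by
    intro g hgA hgB
    have hcl : clamp A = A := hclamp_id A ⟨le_rfl, hAB.le⟩
    have h01 : A ≤ X 1 := by
      rw [← hX0]; exact hXmono (by omega)
    have heq : fifGlue (P g) X (n+1) A = P g 0 A := by
      refine fifGlue_eq_of_mem (P g) X hXmono (hmatch g hgA hgB) (by omega)
        (by rw [hX0]) h01
    have hca : x (km 0).castSucc = A := by
      have h0 : (km 0).castSucc = 0 := Fin.ext (by simp [hkmdef])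
      rw [h0, hA]
    have eA : ℓ (km 0) A = A := by
      have h0 := hinv1 (km 0) A
      rw [hLA, hca] at h0
      exact h0
    have : T0 g A = P g 0 A := by
      simp only [hT0def, hcl, heq]
    rw [this]
    simp only [hPdef, eA, hgA]
    rw [hVA]
    exact congrArg y (Fin.ext (by simp [hkmdef]))
  have hT0B : ∀ (g : ℝ → ℝ), g A = y 0 → g B = yN → T0 g B = yN := by
    intro g hgA hgB
    have hcl : clamp B = B := hclamp_id B ⟨hAB.le, le_rfl⟩
    have hn1 : X (n+1) ≤ B := by
      rw [← hXtop]; exact hXmono (by omega)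
    have heq : fifGlue (P g) X (n+1) B = P g (n+1) B := by
      refine fifGlue_eq_of_mem (P g) X hXmono (hmatch g hgA hgB) le_rfl hn1
        (by rw [hXtop])
    have hcs : x (km (n+1)).succ = B := by
      have h0 : (km (n+1)).succ = Fin.last (n+2) := Fin.ext (by simp [hkmdef, Fin.val_succ])
      rw [h0, hB]
    have eB : ℓ (km (n+1)) B = B := by
      have h0 := hinv1 (km (n+1)) B
      rw [hLB, hcs] at h0
      exact h0
    have : T0 g B = P g (n+1) B := by
      simp only [hT0def, hcl, heq]
    rw [this]
    simp only [hPdef, eB, hgB]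
    rw [hVB]
    exact congrArg y (Fin.ext (by simp [hkmdef, Fin.val_succ]))
  -- the complete metric space of candidate functions
  set SB : Set (BoundedContinuousFunction ℝ ℝ) := {g | g A = y 0 ∧ g B = yN}
    with hSBdef
  have hSBclosed : IsClosed SB := by
    have : SB = {g : BoundedContinuousFunction ℝ ℝ | g A = y 0} ∩
        {g : BoundedContinuousFunction ℝ ℝ | g B = yN} := rfl
    rw [this]
    exact (isClosed_eq (continuous_eval_const A)
        continuous_const).inter
      (isClosed_eq (continuous_eval_const B) continuous_const)
  haveI : CompleteSpace SB := hSBclosed.completeSpace_coe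
  haveI : Nonempty SB := by
    set sl : ℝ := (yN - y 0) / (B - A) with hsl
    set g0 : ℝ → ℝ := fun s => y 0 + sl * (clamp s - A) with hg0
    have hg0c : Continuous g0 :=
      continuous_const.add (continuous_const.mul (hclamp_cont.sub continuous_const))
    have hg0b : ∀ s, ‖g0 s‖ ≤ |y 0| + |sl| * (B - A) := by
      intro s
      obtain ⟨h1, h2⟩ := hclamp_mem s
      have habs : |clamp s - A| ≤ B - A := abs_le.2 ⟨by linarith, by linarith⟩
      calc ‖g0 s‖ ≤ |y 0| + |sl * (clamp s - A)| := by
            rw [hg0]; exact norm_add_le _ _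
        _ = |y 0| + |sl| * |clamp s - A| := by rw [abs_mul]
        _ ≤ |y 0| + |sl| * (B - A) := by
            have := abs_nonneg sl
            nlinarith
    refine ⟨⟨BoundedContinuousFunction.ofNormedAddCommGroup g0 hg0c _ hg0b, ?_, ?_⟩⟩
    · show g0 A = y 0
      rw [hg0]
      simp only [hclamp_id A ⟨le_rfl, hAB.le⟩]
      ring
    · show g0 B = yN
      rw [hg0]
      simp only [hclamp_id B ⟨hAB.le, le_rfl⟩]
      rw [hsl]
      field_simp
      ring
  -- the operator maps SB into itself
  have key : ∀ g : SB, ∃ h : SB, ⇑h.1 = T0 ⇑g.1 := by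
    rintro ⟨g, hgA, hgB⟩
    have hgc : Continuous (⇑g) := g.continuous
    have hcont : Continuous (T0 ⇑g) := hT0cont _ hgc hgA hgB
    have hglue : Continuous (fifGlue (P ⇑g) X (n+1)) :=
      fifGlue_continuous (P ⇑g) X hXmono (hmatch _ hgA hgB) (fun k _ => hPcont _ hgc k)
    obtain ⟨C, hC⟩ := (isCompact_Icc (a := A) (b := B)).exists_bound_of_continuousOn
      hglue.continuousOn
    have hbd : ∀ s, ‖T0 (⇑g) s‖ ≤ C := fun s => hC _ (hclamp_mem s)
    refine ⟨⟨BoundedContinuousFunction.ofNormedAddCommGroup _ hcont C hbd,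
      ?_, ?_⟩, rfl⟩
    · exact hT0A _ hgA hgB
    · exact hT0B _ hgA hgB
  set TS : SB → SB := fun g => (key g).choose with hTSdef
  have hTS : ∀ g : SB, ⇑(TS g).1 = T0 ⇑g.1 := fun g => (key g).choose_spec
  -- contraction constant
  set Dnn : NNReal := Finset.univ.sup (fun k : Fin (n+2) => (⟨d k, (hd k).1⟩ : NNReal))
    with hDnn
  have hdle : ∀ k, d k ≤ (Dnn : ℝ) := by
    intro k
    exact_mod_cast Finset.le_sup (f := fun k : Fin (n+2) => (⟨d k, (hd k).1⟩ : NNReal))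
      (Finset.mem_univ k)
  have hDlt1 : Dnn < 1 := by
    rw [hDnn]; refine (Finset.sup_lt_iff (by norm_num : (⊥ : NNReal) < 1)).2 ?_
    intro k _
    exact_mod_cast (hd k).2
  have hlip : LipschitzWith Dnn TS := by
    refine LipschitzWith.of_dist_le_mul ?_
    intro g g'
    rw [Subtype.dist_eq, BoundedContinuousFunction.dist_le (by positivity)]
    intro s
    rw [Real.dist_eq, hTS g, hTS g']
    have hpw : ∀ k u, |P (⇑g.1) k u - P (⇑g'.1) k u| ≤ (Dnn : ℝ) * dist g g' := by
      intro k u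
      have h1 : P (⇑g.1) k u - P (⇑g'.1) k u =
          d (km k) * (g.1 (ℓ (km k) u) - g'.1 (ℓ (km k) u)) := by
        simp only [hPdef]; ring
      rw [h1, abs_mul, abs_of_nonneg (hd (km k)).1]
      have h2 : |g.1 (ℓ (km k) u) - g'.1 (ℓ (km k) u)| ≤ dist g g' := by
        rw [← Real.dist_eq, Subtype.dist_eq]
        exact BoundedContinuousFunction.dist_coe_le_dist _
      exact mul_le_mul (hdle (km k)) h2 (abs_nonneg _) (by positivity)
    exact fifGlue_dist _ _ X hpw (n+1) (clamp s)
  have hcontr : ContractingWith Dnn TS := ⟨hDlt1, hlip⟩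
  set gfp : SB := ContractingWith.fixedPoint TS hcontr with hgfp
  have hfix : TS gfp = gfp := ContractingWith.fixedPoint_isFixedPt hcontr
  set G : ℝ → ℝ := ⇑gfp.1 with hGdef
  have hGfix : ∀ s, G s = T0 G s := by
    intro s
    conv_lhs => rw [hGdef, ← hfix, hTS gfp]
  have hGA : G A = y 0 := gfp.2.1
  have hGB : G B = yN := gfp.2.2
  have hGcont : Continuous G := gfp.1.continuous
  -- the functional equation
  have hFE : ∀ (k : Fin (n+2)) (t : ℝ), A ≤ t → t ≤ B →
      G (a k * t + b k) = c k * t + d k * G t + e k := by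
    intro k t ht1 ht2
    have hap := hapos k
    have hs1 : x k.castSucc ≤ a k * t + b k := by
      rw [← hLA k]; nlinarith
    have hs2 : a k * t + b k ≤ x k.succ := by
      rw [← hLB k]; nlinarith
    have hsm : a k * t + b k ∈ Set.Icc A B := by
      constructor
      · exact le_trans (hx.monotone (Fin.zero_le _)) hs1
      · exact le_trans hs2 (hx.monotone (Fin.le_last _))
    rw [hGfix (a k * t + b k)]
    have hcl : clamp (a k * t + b k) = a k * t + b k := hclamp_id _ hsm
    have heq : fifGlue (P G) X (n+1) (a k * t + b k) = P G k.val (a k * t + b k) := by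
      refine fifGlue_eq_of_mem (P G) X hXmono (hmatch G hGA hGB) (by omega)
        ?_ ?_
      · rw [hXc k]; exact hs1
      · rw [hXs k]; exact hs2
    have : T0 G (a k * t + b k) = P G k.val (a k * t + b k) := by
      simp only [hT0def, hcl, heq]
    rw [this]
    simp only [hPdef, hkm k, hinv1 k t]
  refine ⟨G, hGcont.continuousOn, ?_, ?_⟩
  · -- interpolation
    intro k
    rcases Fin.eq_zero_or_eq_succ k with h0 | ⟨j, rfl⟩
    · rw [h0]; exact hGA
    · have := hFE j B hAB.le le_rfl
      rw [hLB j] at this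
      rw [this, hGB, hVB j]
  · -- the graph self-similarity
    have hmemIcc : ∀ (k : Fin (n+2)) (s : ℝ), x k.castSucc ≤ s → s ≤ x k.succ →
        ℓ k s ∈ Set.Icc A B := by
      intro k s h1 h2
      have hap := hapos k
      have e1 := hLA k
      have e2 := hLB k
      constructor
      · rw [hℓ, le_div_iff₀ hap]; nlinarith
      · rw [hℓ, div_le_iff₀ hap]; nlinarith
    ext p
    simp only [Set.mem_image, Set.mem_iUnion]
    constructor
    · rintro ⟨t, ht, rfl⟩
      have h0 : X 0 ≤ t := by rw [hX0]; exact ht.1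
      have hN : t ≤ X (n+2) := by rw [hXtop]; exact ht.2
      obtain ⟨j, hj, hj1, hj2⟩ := fif_exists_interval X (n+2) (by omega) h0 hN
      set k : Fin (n+2) := ⟨j, hj⟩ with hk
      have hc1 : x k.castSucc ≤ t := by rw [← hXc k]; exact hj1
      have hc2 : t ≤ x k.succ := by rw [← hXs k]; exact hj2
      have hmem := hmemIcc k t hc1 hc2
      refine ⟨k, (ℓ k t, G (ℓ k t)), ⟨ℓ k t, hmem, rfl⟩, ?_⟩
      rw [hf]
      have hfe := hFE k (ℓ k t) hmem.1 hmem.2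
      rw [hinv2 k t] at hfe
      simp only [hinv2 k t, ← hfe]
    · rintro ⟨k, q, ⟨t, ht, rfl⟩, rfl⟩
      have hap := hapos k
      have hs1 : x k.castSucc ≤ a k * t + b k := by
        rw [← hLA k]; nlinarith [ht.1]
      have hs2 : a k * t + b k ≤ x k.succ := by
        rw [← hLB k]; nlinarith [ht.2]
      refine ⟨a k * t + b k, ⟨le_trans (hx.monotone (Fin.zero_le _)) hs1,
        le_trans hs2 (hx.monotone (Fin.le_last _))⟩, ?_⟩
      rw [hf, hFE k t ht.1 ht.2]
end

section
/- In the affine FIF framework with n ≥ 2 interpolation points, assume the indices are labeled so that s₁ ≤ s₂ ≤ … ≤ sₙ, where s_k = max{d_k, a_k + θ|c_k|}. Let γ_k = (b_k/(1−a_k), b_k c_k/((1−a_k)(1−d_k)) + e_k/(1−d_k)) and M = max_{i,j∈{1,…,n}} ρ(γᵢ, γⱼ). If G is a nonempty compact subset of ℝ² with G = ⋃_{k=1}^{n} f_k(G) (in particular if G is the graph of the affine fractal interpolation function), then G ⊆ (⋃_{k=1}^{n−1} R[γ_k, M s_k (1+sₙ)/(1−s_{n−1} sₙ)]) ∪ R[γₙ,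 M sₙ (1+s_{n−1})/(1−s_{n−1} sₙ)], where R[(x,y),r] = {(u,v) ∈ ℝ² : |x−u| + θ|y−v| ≤ r}. -/
set_option maxHeartbeats 1000000 in
/-- (Covering of the graph of a FIF.)  In the affine FIF framework
with `n + 2 ≥ 2` maps, with the indices labeled so that the contraction ratios
`s_k = max{d_k, a_k + θ|c_k|}` are nondecreasing, with fixed points
`γ_k = (b_k/(1−a_k), b_k c_k/((1−a_k)(1−d_k)) + e_k/(1−d_k))` and
`M = max_{i,j} ρ(γ_i, γ_j)`:  any nonempty compact `G ⊆ ℝ²` with `G = ⋃_k f_k(G)`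
(in particular the graph of the FIF) is contained in the union of the closed
`ρ`-balls (rhombi) `R[γ_k, M s_k (1+s_last)/(1 − s_{last−1} s_last)]` for `k`
before the last index, together with
`R[γ_last, M s_last (1+s_{last−1})/(1 − s_{last−1} s_last)]`. -/
theorem fif_graph_covered_by_rhombi
    (n : ℕ) (x y : Fin (n + 3) → ℝ) (hx : StrictMono x)
    (d : Fin (n + 2) → ℝ) (hd : ∀ k, 0 ≤ d k ∧ d k < 1)
    (a b c e : Fin (n + 2) → ℝ)
    (ha : ∀ k, a k = (x k.succ - x k.castSucc) / (x (Fin.last (n + 2)) - x 0))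
    (hb : ∀ k, b k = (x (Fin.last (n + 2)) * x k.castSucc - x 0 * x k.succ) /
        (x (Fin.last (n + 2)) - x 0))
    (hc : ∀ k, c k = (y k.succ - y k.castSucc) / (x (Fin.last (n + 2)) - x 0) -
        d k * (y (Fin.last (n + 2)) - y 0) / (x (Fin.last (n + 2)) - x 0))
    (he : ∀ k, e k = (x (Fin.last (n + 2)) * y k.castSucc - x 0 * y k.succ) /
        (x (Fin.last (n + 2)) - x 0) -
        d k * (x (Fin.last (n + 2)) * y 0 - x 0 * y (Fin.last (n + 2))) /
        (x (Fin.last (n + 2)) - x 0))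
    (θ : ℝ)
    (hθ : θ = if ∀ k, c k = 0 then 1 else (1 - ⨆ k, a k) / (2 * ⨆ k, |c k|))
    (f : Fin (n + 2) → ℝ × ℝ → ℝ × ℝ)
    (hf : ∀ k (p : ℝ × ℝ), f k p = (a k * p.1 + b k, c k * p.1 + d k * p.2 + e k))
    (s : Fin (n + 2) → ℝ)
    (hs : ∀ k, s k = max (d k) (a k + θ * |c k|))
    (hmono : Monotone s)
    (γ : Fin (n + 2) → ℝ × ℝ)
    (hγ : ∀ k, γ k = (b k / (1 - a k),
        b k * c k / ((1 - a k) * (1 - d k)) + e k / (1 - d k)))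
    (M : ℝ)
    (hM : M = ⨆ p : Fin (n + 2) × Fin (n + 2),
        (|(γ p.1).1 - (γ p.2).1| + θ * |(γ p.1).2 - (γ p.2).2|))
    (G : Set (ℝ × ℝ)) (hG : G.Nonempty) (hGc : IsCompact G)
    (hGfix : G = ⋃ k, f k '' G) :
    G ⊆ (⋃ k : Fin (n + 1),
          {q : ℝ × ℝ | |(γ k.castSucc).1 - q.1| + θ * |(γ k.castSucc).2 - q.2| ≤
            M * s k.castSucc * (1 + s (Fin.last (n + 1))) /
              (1 - s ((Fin.last n).castSucc) * s (Fin.last (n + 1)))}) ∪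
        {q : ℝ × ℝ | |(γ (Fin.last (n + 1))).1 - q.1| +
            θ * |(γ (Fin.last (n + 1))).2 - q.2| ≤
          M * s (Fin.last (n + 1)) * (1 + s ((Fin.last n).castSucc)) /
            (1 - s ((Fin.last n).castSucc) * s (Fin.last (n + 1)))} := by
  classical
  -- abbreviations
  set L : Fin (n + 2) := Fin.last (n + 1) with hLdef
  set P : Fin (n + 2) := (Fin.last n).castSucc with hPdef
  have hθ0 : 0 < x (Fin.last (n + 2)) - x 0 := sub_pos.2 (hx (by simp [Fin.lt_def]))
  -- a k ∈ (0,1)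
  have haux : ∀ k : Fin (n + 2), 0 < a k ∧ a k < 1 := by
    intro k
    have h1 : x k.castSucc < x k.succ := hx Fin.castSucc_lt_succ
    have h0 : x 0 ≤ x k.castSucc := hx.monotone (Fin.zero_le _)
    have h2 : x k.succ ≤ x (Fin.last (n + 2)) := hx.monotone (Fin.le_last _)
    have hstrict : x k.succ - x k.castSucc < x (Fin.last (n + 2)) - x 0 := by
      rcases lt_or_eq_of_le (Nat.lt_succ_iff.1 k.isLt) with hk | hk
      · have : k.succ < Fin.last (n + 2) := by
          simp only [Fin.lt_def, Fin.val_succ, Fin.val_last]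
          omega
        have := hx this
        linarith
      · have : (0 : Fin (n + 3)) < k.castSucc := by
          simp only [Fin.lt_def, Fin.coe_castSucc, Fin.val_zero]
          omega
        have := hx this
        linarith
    constructor
    · rw [ha k]; exact div_pos (by linarith) hθ0
    · rw [ha k]; rw [div_lt_one hθ0]; exact hstrict
  -- θ > 0 and a k + θ|c k| < 1
  have hθs : 0 < θ ∧ ∀ k, a k + θ * |c k| < 1 := by
    by_cases hall : ∀ k, c k = 0
    · rw [hθ, if_pos hall]
      refine ⟨one_pos, fun k => ?_⟩
      rw [hall k, abs_zero, mul_zero, add_zero]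
      exact (haux k).2
    · rw [hθ, if_neg hall]
      have hbdd_a : BddAbove (Set.range a) := Set.Finite.bddAbove (Set.finite_range a)
      have hbdd_c : BddAbove (Set.range fun k => |c k|) :=
        Set.Finite.bddAbove (Set.finite_range _)
      obtain ⟨k0, hk0⟩ := Finite.exists_max a
      have hsa : (⨆ k, a k) < 1 := lt_of_le_of_lt (ciSup_le hk0) (haux k0).2
      have hsa' : ∀ k, a k ≤ ⨆ k, a k := fun k => le_ciSup hbdd_a k
      obtain ⟨k1, hk1⟩ := not_forall.1 hall
      have hsc : 0 < ⨆ k, |c k| := lt_of_lt_of_le (abs_pos.2 hk1) (le_ciSup hbdd_c k1)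
      have hθpos : 0 < (1 - ⨆ k, a k) / (2 * ⨆ k, |c k|) := by
        apply div_pos (by linarith) (by linarith)
      refine ⟨hθpos, fun k => ?_⟩
      have h1 : |c k| ≤ ⨆ k, |c k| := le_ciSup hbdd_c k
      have key : (1 - ⨆ k, a k) / (2 * ⨆ k, |c k|) * |c k| ≤ (1 - ⨆ k, a k) / 2 := by
        rw [div_mul_eq_mul_div, div_le_div_iff₀ (by linarith) two_pos]
        nlinarith [abs_nonneg (c k)]
      have h2 := hsa' k
      linarith
  have hθpos : 0 < θ := hθs.1
  -- s bounds
  have hs0 : ∀ k, 0 ≤ s k := by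
    intro k; rw [hs k]; exact le_max_of_le_left (hd k).1
  have hs1 : ∀ k, s k < 1 := by
    intro k; rw [hs k]; exact max_lt (hd k).2 (hθs.2 k)
  -- fixed points
  have hfix : ∀ k, f k (γ k) = γ k := by
    intro k
    have ha1 : (1 : ℝ) - a k ≠ 0 := by have := (haux k).2; intro h; linarith
    have hd1 : (1 : ℝ) - d k ≠ 0 := by have := (hd k).2; intro h; linarith
    rw [hf, hγ]
    refine Prod.ext ?_ ?_ <;> simp only <;> field_simp <;> ring
  -- contraction
  have hcontr : ∀ k (p q : ℝ × ℝ),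
      |(f k p).1 - (f k q).1| + θ * |(f k p).2 - (f k q).2| ≤
        s k * (|p.1 - q.1| + θ * |p.2 - q.2|) := by
    intro k p q
    rw [hf, hf]
    simp only
    have h1 : a k * p.1 + b k - (a k * q.1 + b k) = a k * (p.1 - q.1) := by ring
    have h2 : c k * p.1 + d k * p.2 + e k - (c k * q.1 + d k * q.2 + e k) =
        c k * (p.1 - q.1) + d k * (p.2 - q.2) := by ring
    rw [h1, h2]
    have t1 : |a k * (p.1 - q.1)| = a k * |p.1 - q.1| := by
      rw [abs_mul, abs_of_pos (haux k).1]
    have t2 : |c k * (p.1 - q.1) + d k * (p.2 - q.2)| ≤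
        |c k| * |p.1 - q.1| + d k * |p.2 - q.2| := by
      calc |c k * (p.1 - q.1) + d k * (p.2 - q.2)|
          ≤ |c k * (p.1 - q.1)| + |d k * (p.2 - q.2)| := abs_add_le _ _
        _ = |c k| * |p.1 - q.1| + d k * |p.2 - q.2| := by
            rw [abs_mul, abs_mul, abs_of_nonneg (hd k).1]
    have hsk1 : a k + θ * |c k| ≤ s k := by rw [hs k]; exact le_max_right _ _
    have hsk2 : d k ≤ s k := by rw [hs k]; exact le_max_left _ _
    have e1 : (a k + θ * |c k|) * |p.1 - q.1| ≤ s k * |p.1 - q.1| :=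
      mul_le_mul_of_nonneg_right hsk1 (abs_nonneg _)
    have e2 : d k * (θ * |p.2 - q.2|) ≤ s k * (θ * |p.2 - q.2|) :=
      mul_le_mul_of_nonneg_right hsk2 (by positivity)
    have e3 : θ * |c k * (p.1 - q.1) + d k * (p.2 - q.2)| ≤
        θ * (|c k| * |p.1 - q.1| + d k * |p.2 - q.2|) :=
      mul_le_mul_of_nonneg_left t2 hθpos.le
    rw [t1]
    nlinarith [e1, e2, e3]
  -- M facts
  have hMbdd : BddAbove (Set.range fun p : Fin (n + 2) × Fin (n + 2) =>
      |(γ p.1).1 - (γ p.2).1| + θ * |(γ p.1).2 - (γ p.2).2|) :=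
    Set.Finite.bddAbove (Set.finite_range _)
  have hMge : ∀ i j, |(γ i).1 - (γ j).1| + θ * |(γ i).2 - (γ j).2| ≤ M := by
    intro i j
    rw [hM]
    exact le_ciSup hMbdd (i, j)
  have hM0 : 0 ≤ M := by
    have := hMge 0 0
    simpa using this
  -- order facts
  have hkL : ∀ k : Fin (n + 2), s k ≤ s L := fun k => hmono (Fin.le_last k)
  have hkP : ∀ k : Fin (n + 2), k ≠ L → s k ≤ s P := by
    intro k hk
    apply hmono
    have h1 : k.val < n + 1 := by
      have h2 : k.val ≤ n + 1 := Nat.lt_succ_iff.1 k.isLt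
      rcases lt_or_eq_of_le h2 with h | h
      · exact h
      · exact absurd (Fin.ext (by simp [hLdef, h])) hk
    have : (P : Fin (n+2)).val = n := by simp [hPdef]
    rw [Fin.le_def, this]
    omega
  have hPL : s P ≤ s L := hkL P
  set D : ℝ := 1 - s P * s L with hDdef
  have hD0 : 0 < D := by nlinarith [hs0 P, hs0 L, hs1 P, hs1 L]
  -- the radii
  set r : Fin (n + 2) → ℝ :=
    fun k => if k = L then M * s L * (1 + s P) / D else M * s k * (1 + s L) / D with hrdef
  have hrL : r L = M * s L * (1 + s P) / D := by simp [hrdef]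
  have hrne : ∀ j, j ≠ L → r j = M * s j * (1 + s L) / D := by
    intro j hj; simp [hrdef, hj]
  have hr0 : ∀ k, 0 ≤ r k := by
    intro k
    rcases eq_or_ne k L with rfl | hk
    · rw [hrL]
      exact div_nonneg (mul_nonneg (mul_nonneg hM0 (hs0 L)) (by linarith [hs0 P])) hD0.le
    · rw [hrne k hk]
      exact div_nonneg (mul_nonneg (mul_nonneg hM0 (hs0 k)) (by linarith [hs0 L])) hD0.le
  -- key inequality
  have hexp : ∀ t u : ℝ, t * (M + u / D) = t * (M * D + u) / D := by
    intro t u; field_simp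
  have hkey : ∀ k j : Fin (n + 2), s k * ((if j = k then (0 : ℝ) else M) + r j) ≤ r k := by
    intro k j
    rcases eq_or_ne j k with rfl | hjk
    · rw [if_pos rfl, zero_add]
      nlinarith [hs0 j, hs1 j, hr0 j]
    · rw [if_neg hjk]
      rcases eq_or_ne k L with rfl | hkL'
      · have hjL : j ≠ L := hjk
        rw [hrne j hjL, hrL, hexp, div_le_div_iff₀ hD0 hD0]
        have hsj : s j ≤ s P := hkP j hjL
        have h1 : s j * (1 + s L) ≤ s P * (1 + s L) :=
          mul_le_mul_of_nonneg_right hsj (by nlinarith [hs0 L])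
        have h2 : M * s L * (s j * (1 + s L)) ≤ M * s L * (s P * (1 + s L)) :=
          mul_le_mul_of_nonneg_left h1 (mul_nonneg hM0 (hs0 L))
        rw [hDdef]
        nlinarith [h2, hD0, mul_nonneg hM0 (hs0 L)]
      · rw [hrne k hkL']
        rcases eq_or_ne j L with rfl | hjL
        · rw [hrL, hexp, div_le_div_iff₀ hD0 hD0]
          rw [hDdef]
          nlinarith [mul_nonneg hM0 (hs0 k)]
        · rw [hrne j hjL, hexp, div_le_div_iff₀ hD0 hD0]
          have hsjP : s j ≤ s P := hkP j hjL
          have hsjL : s j ≤ s L := hkL j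
          have hMk : (0:ℝ) ≤ M * s k := mul_nonneg hM0 (hs0 k)
          have h1 : M * s k * s j ≤ M * s k * s L := mul_le_mul_of_nonneg_left hsjL hMk
          have h2 : s j * s L ≤ s P * s L := mul_le_mul_of_nonneg_right hsjP (hs0 L)
          have h3 : M * s k * (s j * s L) ≤ M * s k * (s P * s L) :=
            mul_le_mul_of_nonneg_left h2 hMk
          rw [hDdef]
          nlinarith [h1, h3, hD0]
  -- the min-distance function
  set g : ℝ × ℝ → ℝ := fun p =>
    Finset.univ.inf' Finset.univ_nonempty
      (fun j => |p.1 - (γ j).1| + θ * |p.2 - (γ j).2| - r j) with hgdef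
  have hgle : ∀ p j, g p ≤ |p.1 - (γ j).1| + θ * |p.2 - (γ j).2| - r j := by
    intro p j
    exact Finset.inf'_le _ (Finset.mem_univ j)
  have hgex : ∀ p, ∃ j, g p = |p.1 - (γ j).1| + θ * |p.2 - (γ j).2| - r j := by
    intro p
    obtain ⟨j, _, hj⟩ := Finset.exists_mem_eq_inf' (Finset.univ_nonempty)
      (fun j => |p.1 - (γ j).1| + θ * |p.2 - (γ j).2| - r j)
    exact ⟨j, hj⟩
  -- sup of g over G
  obtain ⟨C, hC⟩ := hGc.isBounded.subset_closedBall 0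
  set A : Set ℝ := g '' G with hAdef
  have hAne : A.Nonempty := hG.image g
  have hAbdd : BddAbove A := by
    refine ⟨C + |(γ 0).1| + θ * (C + |(γ 0).2|) - r 0, ?_⟩
    rintro t ⟨p, hp, rfl⟩
    have hnorm : ‖p‖ ≤ C := by
      have := hC hp
      rwa [Metric.mem_closedBall, dist_zero_right] at this
    have h1 : |p.1| ≤ C := le_trans (norm_fst_le p) hnorm
    have h2 : |p.2| ≤ C := le_trans (norm_snd_le p) hnorm
    refine le_trans (hgle p 0) ?_
    have t1 : |p.1 - (γ 0).1| ≤ |p.1| + |(γ 0).1| := abs_sub _ _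
    have t2 : |p.2 - (γ 0).2| ≤ |p.2| + |(γ 0).2| := abs_sub _ _
    have t3 : θ * |p.2 - (γ 0).2| ≤ θ * (C + |(γ 0).2|) :=
      mul_le_mul_of_nonneg_left (by linarith) hθpos.le
    linarith
  set ε : ℝ := sSup A with hεdef
  have hεle : ∀ p ∈ G, g p ≤ ε := fun p hp => le_csSup hAbdd ⟨p, hp, rfl⟩
  have hεnonpos : ε ≤ 0 := by
    have hstep : ∀ p ∈ G, g p ≤ s L * max ε 0 := by
      intro p hp
      rw [hGfix] at hp
      simp only [Set.mem_iUnion, Set.mem_image] at hp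
      obtain ⟨k, q, hq, hfq⟩ := hp
      subst hfq
      obtain ⟨j, hj⟩ := hgex q
      have hqj : |q.1 - (γ j).1| + θ * |q.2 - (γ j).2| ≤ r j + ε := by
        have := hεle q hq; rw [hj] at this; linarith
      have c1 : |(f k q).1 - (γ k).1| + θ * |(f k q).2 - (γ k).2| ≤
          s k * (|q.1 - (γ k).1| + θ * |q.2 - (γ k).2|) := by
        have h := hcontr k q (γ k)
        rwa [hfix k] at h
      have c2 : |q.1 - (γ k).1| + θ * |q.2 - (γ k).2| ≤
          ((if j = k then (0 : ℝ) else M) + r j) + ε := by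
        rcases eq_or_ne j k with rfl | hne
        · rw [if_pos rfl, zero_add]; linarith
        · rw [if_neg hne]
          have t1 : |q.1 - (γ k).1| ≤ |q.1 - (γ j).1| + |(γ j).1 - (γ k).1| :=
            abs_sub_le _ _ _
          have t2 : |q.2 - (γ k).2| ≤ |q.2 - (γ j).2| + |(γ j).2 - (γ k).2| :=
            abs_sub_le _ _ _
          have t3 := hMge j k
          have t4 : θ * |q.2 - (γ k).2| ≤ θ * (|q.2 - (γ j).2| + |(γ j).2 - (γ k).2|) :=
            mul_le_mul_of_nonneg_left t2 hθpos.le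
          have t5 : θ * (|q.2 - (γ j).2| + |(γ j).2 - (γ k).2|) =
              θ * |q.2 - (γ j).2| + θ * |(γ j).2 - (γ k).2| := by ring
          linarith
      have c5 : s k * (|q.1 - (γ k).1| + θ * |q.2 - (γ k).2|) ≤
          s k * (((if j = k then (0 : ℝ) else M) + r j) + ε) :=
        mul_le_mul_of_nonneg_left c2 (hs0 k)
      have c3 : s k * (((if j = k then (0 : ℝ) else M) + r j) + ε) ≤ r k + s k * ε := by
        have := hkey k j
        nlinarith [this]
      have c4 : g (f k q) ≤ |(f k q).1 - (γ k).1| + θ * |(f k q).2 - (γ k).2| - r k :=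
        hgle _ k
      have c6 : g (f k q) ≤ s k * ε := by linarith
      rcases le_or_gt ε 0 with h | h
      · rw [max_eq_right h]
        have : s k * ε ≤ 0 := mul_nonpos_of_nonneg_of_nonpos (hs0 k) h
        rw [mul_zero]
        linarith
      · rw [max_eq_left h.le]
        have : s k * ε ≤ s L * ε := mul_le_mul_of_nonneg_right (hkL k) h.le
        linarith
    have hfin : ε ≤ s L * max ε 0 := by
      apply csSup_le hAne
      rintro t ⟨p, hp, rfl⟩
      exact hstep p hp
    by_contra hpos
    push_neg at hpos
    rw [max_eq_left hpos.le] at hfin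
    nlinarith [hs1 L, hs0 L]
  -- conclusion
  intro p hp
  have hgp : g p ≤ 0 := le_trans (hεle p hp) hεnonpos
  obtain ⟨j, hj⟩ := hgex p
  have hpj : |p.1 - (γ j).1| + θ * |p.2 - (γ j).2| ≤ r j := by
    rw [hj] at hgp; linarith
  rcases eq_or_ne j L with rfl | hjL
  · right
    simp only [Set.mem_setOf_eq]
    rw [abs_sub_comm ((γ L).1) p.1, abs_sub_comm ((γ L).2) p.2]
    rw [hrL] at hpj
    exact hpj
  · left
    rw [Set.mem_iUnion]
    refine ⟨j.castPred hjL, ?_⟩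
    simp only [Set.mem_setOf_eq, Fin.castSucc_castPred]
    rw [abs_sub_comm ((γ j).1) p.1, abs_sub_comm ((γ j).2) p.2]
    rw [hrne j hjL] at hpj
    exact hpj
end

section
/- In the affine FIF framework with n ≥ 2 interpolation points, assume the indices are labeled so that s₁ ≤ s₂ ≤ … ≤ sₙ, where s_k = max{d_k, a_k + θ|c_k|}. Let M = max_{i,j∈{1,…,n}} ρ(γᵢ, γⱼ), where γ_k = (b_k/(1−a_k), b_k c_k/((1−a_k)(1−d_k)) + e_k/(1−d_k)). Define A = min{ min_{1≤k≤n−1} ( b_k c_k/((1−a_k)(1−d_k)) + e_k/(1−d_k) − M s_k (1+sₙ)/(θ(1−s_{n−1} sₙ)) ), bₙ cₙ/((1−aₙ)(1−dₙ)) + eₙ/(1−dₙ) − M sₙ (1+s_{n−1})/(θ(1−s_{n−1} sₙ)) } and B = max{ max_{1≤k≤n−1} ( b_k c_k/((1−a_k)(1−d_k)) + e_k/(1−d_k) + M s_k (1+sₙ)/(θ(1−s_{n−1} sₙ)) ), bₙ cₙ/((1−aₙ)(1−dₙ)) + eₙ/(1−dₙ) + M sₙ (1+s_{n−1})/(θ(1−s_{n−1}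 sₙ)) }. If G is a nonempty compact subset of ℝ² with G = ⋃_{k=1}^{n} f_k(G) (in particular the graph of the affine fractal interpolation function f, so that the range of f is the set of second coordinates of G), then every (x,y) ∈ G satisfies A ≤ y ≤ B. -/
private lemma rho_triangle {θ : ℝ} (hθ : 0 ≤ θ) (p q r : ℝ × ℝ) :
    |p.1 - r.1| + θ * |p.2 - r.2| ≤
      (|p.1 - q.1| + θ * |p.2 - q.2|) + (|q.1 - r.1| + θ * |q.2 - r.2|) := by
  have h1 := abs_sub_le p.1 q.1 r.1
  have h2 := abs_sub_le p.2 q.2 r.2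
  nlinarith [abs_nonneg (p.2 - q.2), abs_nonneg (q.2 - r.2)]

private lemma rho_contract {θ aa bb cc dd ee ss : ℝ} (hθ : 0 ≤ θ) (haa : 0 ≤ aa) (hdd : 0 ≤ dd)
    (hss : max dd (aa + θ * |cc|) ≤ ss) (p q : ℝ × ℝ) :
    |(aa * p.1 + bb) - (aa * q.1 + bb)| +
      θ * |(cc * p.1 + dd * p.2 + ee) - (cc * q.1 + dd * q.2 + ee)| ≤
      ss * (|p.1 - q.1| + θ * |p.2 - q.2|) := by
  have e1 : (aa * p.1 + bb) - (aa * q.1 + bb) = aa * (p.1 - q.1) := by ring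
  have e2 : (cc * p.1 + dd * p.2 + ee) - (cc * q.1 + dd * q.2 + ee)
      = cc * (p.1 - q.1) + dd * (p.2 - q.2) := by ring
  rw [e1, e2, abs_mul, abs_of_nonneg haa]
  have h3 : |cc * (p.1 - q.1) + dd * (p.2 - q.2)| ≤ |cc| * |p.1 - q.1| + dd * |p.2 - q.2| := by
    calc |cc * (p.1 - q.1) + dd * (p.2 - q.2)| ≤ |cc * (p.1 - q.1)| + |dd * (p.2 - q.2)| :=
          abs_add_le _ _
      _ = |cc| * |p.1 - q.1| + dd * |p.2 - q.2| := by rw [abs_mul, abs_mul, abs_of_nonneg hdd]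
  have hd' : dd ≤ ss := le_trans (le_max_left _ _) hss
  have ha' : aa + θ * |cc| ≤ ss := le_trans (le_max_right _ _) hss
  nlinarith [abs_nonneg (p.1 - q.1), abs_nonneg (p.2 - q.2),
    mul_le_mul_of_nonneg_left h3 hθ, mul_nonneg hθ (abs_nonneg (p.2 - q.2))]


private lemma fif_step1 {sg M U' v : ℝ} (hsg0 : 0 ≤ sg) (hsg1 : sg < 1) (hv0 : 0 ≤ v)
    (hM0 : 0 ≤ M) (hU'0 : 0 ≤ U') (h : v ≤ sg * max v (M + U')) : v ≤ sg * (M + U') := by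
  rcases max_cases v (M + U') with ⟨hmax, _⟩ | ⟨hmax, _⟩ <;> rw [hmax] at h
  · have h6 : v ≤ 0 := by nlinarith
    nlinarith [mul_nonneg hsg0 (add_nonneg hM0 hU'0)]
  · exact h

private lemma fif_step4 {ta sg M U U' v : ℝ} (hτ0 : 0 ≤ ta) (hσ0 : 0 ≤ sg) (hτσ : ta ≤ sg)
    (hσ1 : sg < 1) (hM0 : 0 ≤ M) (hU'0 : 0 ≤ U')
    (hU'rec : U' ≤ ta * (M + U)) (hUle : U ≤ max U' v) (huN : v ≤ sg * (M + U')) :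
    U' * (1 - ta * sg) ≤ ta * M * (1 + sg) := by
  rcases max_cases U' v with ⟨hmax, _⟩ | ⟨hmax, _⟩ <;> rw [hmax] at hUle
  · have h2 : U' ≤ ta * (M + U') := le_trans hU'rec (by nlinarith)
    nlinarith [mul_le_mul_of_nonneg_left h2 hσ0, mul_nonneg hU'0 (sub_nonneg.2 hτσ)]
  · have h2 : U' ≤ ta * (M + v) := le_trans hU'rec (by nlinarith)
    nlinarith [mul_le_mul_of_nonneg_left huN hτ0]

private lemma fif_step5 {ta sg M U' v : ℝ} (hσ0 : 0 ≤ sg) (h1 : 0 < 1 - ta * sg)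
    (hU'fin : U' * (1 - ta * sg) ≤ ta * M * (1 + sg)) (huN : v ≤ sg * (M + U')) :
    v * (1 - ta * sg) ≤ sg * M * (1 + ta) := by
  nlinarith [mul_le_mul_of_nonneg_left hU'fin hσ0, mul_le_mul_of_nonneg_right huN h1.le]

private lemma fif_step6 {ta sg M U U' v : ℝ} (h1 : 0 < 1 - ta * sg) (hM0 : 0 ≤ M)
    (hτσ : ta ≤ sg)
    (hU'fin : U' * (1 - ta * sg) ≤ ta * M * (1 + sg))
    (hvfin : v * (1 - ta * sg) ≤ sg * M * (1 + ta))
    (hUle : U ≤ max U' v) : U * (1 - ta * sg) ≤ sg * M * (1 + ta) := by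
  rcases max_cases U' v with ⟨hmax, _⟩ | ⟨hmax, _⟩ <;> rw [hmax] at hUle
  · nlinarith [mul_le_mul_of_nonneg_right hUle h1.le, mul_nonneg hM0 (sub_nonneg.2 hτσ)]
  · nlinarith [mul_le_mul_of_nonneg_right hUle h1.le]

private lemma fif_step7 {ta sg M U w sk : ℝ} (h1 : 0 < 1 - ta * sg) (hsk0 : 0 ≤ sk)
    (h2 : w ≤ sk * (M + U)) (hUfin : U * (1 - ta * sg) ≤ sg * M * (1 + ta)) :
    w * (1 - ta * sg) ≤ M * sk * (1 + sg) := by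
  nlinarith [mul_le_mul_of_nonneg_right h2 h1.le, mul_le_mul_of_nonneg_left hUfin hsk0]

private lemma fif_bnd {θ t w R D : ℝ} (hD : 0 ≤ D) (h1 : θ * t ≤ w) (h2 : w * D ≤ R) :
    t * (θ * D) ≤ R := by nlinarith [mul_le_mul_of_nonneg_right h1 hD]

/-- (Range estimate for a FIF.)  In the affine FIF framework with
`n + 2 ≥ 2` maps, indices labeled so that `s_k = max{d_k, a_k + θ|c_k|}` is
nondecreasing, fixed points `γ_k`, `M = max_{i,j} ρ(γ_i, γ_j)`, and `A`, `B` defined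
as the min/max over `k` of the second coordinates of the fixed points shifted down/up
by the corresponding rhombus half-heights:  every nonempty compact `G ⊆ ℝ²` with
`G = ⋃_k f_k(G)` (in particular the graph of the FIF, so that `Im f ⊆ [A,B]`)
satisfies `A ≤ y ≤ B` for all `(x,y) ∈ G`. -/
theorem fif_range_estimate
    (n : ℕ) (x y : Fin (n + 3) → ℝ) (hx : StrictMono x)
    (d : Fin (n + 2) → ℝ) (hd : ∀ k, 0 ≤ d k ∧ d k < 1)
    (a b c e : Fin (n + 2) → ℝ)
    (ha : ∀ k, a k = (x k.succ - x k.castSucc) / (x (Fin.last (n + 2)) - x 0))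
    (hb : ∀ k, b k = (x (Fin.last (n + 2)) * x k.castSucc - x 0 * x k.succ) /
        (x (Fin.last (n + 2)) - x 0))
    (hc : ∀ k, c k = (y k.succ - y k.castSucc) / (x (Fin.last (n + 2)) - x 0) -
        d k * (y (Fin.last (n + 2)) - y 0) / (x (Fin.last (n + 2)) - x 0))
    (he : ∀ k, e k = (x (Fin.last (n + 2)) * y k.castSucc - x 0 * y k.succ) /
        (x (Fin.last (n + 2)) - x 0) -
        d k * (x (Fin.last (n + 2)) * y 0 - x 0 * y (Fin.last (n + 2))) /
        (x (Fin.last (n + 2)) - x 0))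
    (θ : ℝ)
    (hθ : θ = if ∀ k, c k = 0 then 1 else (1 - ⨆ k, a k) / (2 * ⨆ k, |c k|))
    (f : Fin (n + 2) → ℝ × ℝ → ℝ × ℝ)
    (hf : ∀ k (p : ℝ × ℝ), f k p = (a k * p.1 + b k, c k * p.1 + d k * p.2 + e k))
    (s : Fin (n + 2) → ℝ)
    (hs : ∀ k, s k = max (d k) (a k + θ * |c k|))
    (hmono : Monotone s)
    (γ : Fin (n + 2) → ℝ × ℝ)
    (hγ : ∀ k, γ k = (b k / (1 - a k),
        b k * c k / ((1 - a k) * (1 - d k)) + e k / (1 - d k)))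
    (M : ℝ)
    (hM : M = ⨆ p : Fin (n + 2) × Fin (n + 2),
        (|(γ p.1).1 - (γ p.2).1| + θ * |(γ p.1).2 - (γ p.2).2|))
    (A B : ℝ)
    (hA : A = min
      (⨅ k : Fin (n + 1),
        (b k.castSucc * c k.castSucc /
            ((1 - a k.castSucc) * (1 - d k.castSucc)) +
          e k.castSucc / (1 - d k.castSucc) -
          M * s k.castSucc * (1 + s (Fin.last (n + 1))) /
            (θ * (1 - s ((Fin.last n).castSucc) * s (Fin.last (n + 1))))))
      (b (Fin.last (n + 1)) * c (Fin.last (n + 1)) /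
          ((1 - a (Fin.last (n + 1))) * (1 - d (Fin.last (n + 1)))) +
        e (Fin.last (n + 1)) / (1 - d (Fin.last (n + 1))) -
        M * s (Fin.last (n + 1)) * (1 + s ((Fin.last n).castSucc)) /
          (θ * (1 - s ((Fin.last n).castSucc) * s (Fin.last (n + 1))))))
    (hB : B = max
      (⨆ k : Fin (n + 1),
        (b k.castSucc * c k.castSucc /
            ((1 - a k.castSucc) * (1 - d k.castSucc)) +
          e k.castSucc / (1 - d k.castSucc) +
          M * s k.castSucc * (1 + s (Fin.last (n + 1))) /
            (θ * (1 - s ((Fin.last n).castSucc) * s (Fin.last (n + 1))))))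
      (b (Fin.last (n + 1)) * c (Fin.last (n + 1)) /
          ((1 - a (Fin.last (n + 1))) * (1 - d (Fin.last (n + 1)))) +
        e (Fin.last (n + 1)) / (1 - d (Fin.last (n + 1))) +
        M * s (Fin.last (n + 1)) * (1 + s ((Fin.last n).castSucc)) /
          (θ * (1 - s ((Fin.last n).castSucc) * s (Fin.last (n + 1))))))
    (G : Set (ℝ × ℝ)) (hG : G.Nonempty) (hGc : IsCompact G)
    (hGfix : G = ⋃ k, f k '' G) :
    ∀ p ∈ G, A ≤ p.2 ∧ p.2 ≤ B := by
  have hd0 : ∀ k, 0 ≤ d k := fun k => (hd k).1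
  have hd1 : ∀ k, d k < 1 := fun k => (hd k).2
  have hxl : (0:ℝ) < x (Fin.last (n+2)) - x 0 := sub_pos.2 (hx Fin.last_pos)
  have ha0 : ∀ k, 0 < a k := by
    intro k
    rw [ha k]
    exact div_pos (sub_pos.2 (hx (Fin.castSucc_lt_succ (i := k)))) hxl
  have ha1 : ∀ k, a k < 1 := by
    intro k
    rw [ha k, div_lt_one hxl]
    have h1 : x 0 ≤ x k.castSucc := hx.monotone (Fin.zero_le _)
    have h2 : x k.succ ≤ x (Fin.last (n+2)) := hx.monotone (Fin.le_last _)
    rcases eq_or_ne k 0 with rfl | hk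
    · have h3 : x (0:Fin (n+2)).succ < x (Fin.last (n+2)) := by
        apply hx
        simp [Fin.lt_def]
      linarith
    · have h3 : x 0 < x k.castSucc := by
        apply hx
        have : (k:ℕ) ≠ 0 := fun h => hk (Fin.ext h)
        rw [Fin.lt_def]
        simp only [Fin.val_zero, Fin.coe_castSucc]
        omega
      linarith
  have hsupa : (⨆ k, a k) < 1 := by
    obtain ⟨k, hk⟩ := Finite.exists_max a
    exact lt_of_le_of_lt (ciSup_le hk) (ha1 k)
  have hθpos : 0 < θ := by
    rw [hθ]
    split_ifs with h
    · norm_num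
    · push_neg at h
      obtain ⟨k, hk⟩ := h
      have h1 : 0 < ⨆ k, |c k| :=
        lt_of_lt_of_le (abs_pos.2 hk)
          (le_ciSup (f := fun k => |c k|) ((Set.finite_range _).bddAbove) k)
      exact div_pos (by linarith) (by linarith)
  have hac1 : ∀ k, a k + θ * |c k| < 1 := by
    intro k
    rw [hθ]
    split_ifs with h
    · rw [h k]
      simpa using ha1 k
    · push_neg at h
      obtain ⟨j, hj⟩ := h
      have hC : 0 < ⨆ k, |c k| :=
        lt_of_lt_of_le (abs_pos.2 hj)
          (le_ciSup (f := fun k => |c k|) ((Set.finite_range _).bddAbove) j)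
      have hck : |c k| ≤ ⨆ k, |c k| :=
        le_ciSup (f := fun k => |c k|) ((Set.finite_range _).bddAbove) k
      have hak : a k ≤ ⨆ k, a k := le_ciSup ((Set.finite_range _).bddAbove) k
      have key : (1 - ⨆ k, a k) / (2 * ⨆ k, |c k|) * |c k| ≤ (1 - ⨆ k, a k) / 2 := by
        rw [div_mul_eq_mul_div, div_le_div_iff₀ (by linarith) (by norm_num)]
        nlinarith [abs_nonneg (c k)]
      nlinarith
  have hs0 : ∀ k, 0 ≤ s k := by
    intro k
    rw [hs k]
    exact le_trans (hd0 k) (le_max_left _ _)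
  have hs1 : ∀ k, s k < 1 := by
    intro k
    rw [hs k]
    exact max_lt (hd1 k) (hac1 k)
  set σ := s (Fin.last (n+1)) with hσdef
  set τ := s ((Fin.last n).castSucc) with hτdef
  have hσ0 : 0 ≤ σ := hs0 _
  have hσ1 : σ < 1 := hs1 _
  have hτ0 : 0 ≤ τ := hs0 _
  have hτ1 : τ < 1 := hs1 _
  have hτσle : τ ≤ σ := hmono (Fin.le_last _)
  have h1 : 0 < 1 - τ * σ := by nlinarith
  -- fixed points
  have hγfix : ∀ k, f k (γ k) = γ k := by
    intro k
    have h2 : (1:ℝ) - a k ≠ 0 := by have := ha1 k; intro hh; linarith [sub_eq_zero.1 hh]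
    have h3 : (1:ℝ) - d k ≠ 0 := by have := hd1 k; intro hh; linarith [sub_eq_zero.1 hh]
    rw [hf, hγ, Prod.mk.injEq]
    constructor
    · show a k * (b k / (1 - a k)) + b k = b k / (1 - a k)
      field_simp
      ring
    · show c k * (b k / (1 - a k)) + d k * (b k * c k / ((1 - a k) * (1 - d k)) + e k / (1 - d k))
          + e k = b k * c k / ((1 - a k) * (1 - d k)) + e k / (1 - d k)
      field_simp
      ring
  -- contraction
  have hct : ∀ k (p q : ℝ × ℝ),
      |(f k p).1 - (f k q).1| + θ * |(f k p).2 - (f k q).2| ≤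
        s k * (|p.1 - q.1| + θ * |p.2 - q.2|) := by
    intro k p q
    rw [hf, hf]
    exact rho_contract hθpos.le (ha0 k).le (hd0 k) (hs k).ge p q
  -- the suprema u k
  obtain ⟨u, hu⟩ : ∃ u : Fin (n+2) → ℝ, u = fun k =>
      sSup ((fun p : ℝ × ℝ => |p.1 - (γ k).1| + θ * |p.2 - (γ k).2|) '' (f k '' G)) := ⟨_, rfl⟩
  have hGsub : ∀ k, f k '' G ⊆ G := fun k =>
    le_trans (Set.subset_iUnion (fun j => f j '' G) k) hGfix.ge
  have hbdd : ∀ k, BddAbove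
      ((fun p : ℝ × ℝ => |p.1 - (γ k).1| + θ * |p.2 - (γ k).2|) '' (f k '' G)) := by
    intro k
    have hcont : Continuous fun p : ℝ × ℝ => |p.1 - (γ k).1| + θ * |p.2 - (γ k).2| := by
      fun_prop
    exact (hGc.bddAbove_image hcont.continuousOn).mono (Set.image_mono (hGsub k))
  have hune : ∀ k, ((fun p : ℝ × ℝ => |p.1 - (γ k).1| + θ * |p.2 - (γ k).2|) ''
      (f k '' G)).Nonempty := fun k => (hG.image (f k)).image _
  have hub : ∀ k p, p ∈ f k '' G → |p.1 - (γ k).1| + θ * |p.2 - (γ k).2| ≤ u k := by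
    intro k p hp
    rw [hu]
    exact le_csSup (hbdd k) (Set.mem_image_of_mem _ hp)
  have hu0 : ∀ k, 0 ≤ u k := by
    intro k
    obtain ⟨p, hp⟩ := hG.image (f k)
    exact le_trans (add_nonneg (abs_nonneg _) (mul_nonneg hθpos.le (abs_nonneg _))) (hub k p hp)
  have husup : ∀ k (r : ℝ), (∀ p ∈ f k '' G,
      |p.1 - (γ k).1| + θ * |p.2 - (γ k).2| ≤ r) → u k ≤ r := by
    intro k r hr
    rw [hu]
    apply csSup_le (hune k)
    rintro _ ⟨p, hp, rfl⟩
    exact hr p hp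
  -- facts about M
  have hMle : ∀ i j, |(γ i).1 - (γ j).1| + θ * |(γ i).2 - (γ j).2| ≤ M := by
    intro i j
    rw [hM]
    exact le_ciSup (f := fun p : Fin (n+2) × Fin (n+2) =>
      |(γ p.1).1 - (γ p.2).1| + θ * |(γ p.1).2 - (γ p.2).2|)
      ((Set.finite_range _).bddAbove) (i, j)
  have hM0 : 0 ≤ M := le_trans (by simp) (hMle 0 0)
  -- U and U'
  obtain ⟨U, hU⟩ : ∃ U : ℝ, U = ⨆ j, u j := ⟨_, rfl⟩
  obtain ⟨U', hU'⟩ : ∃ U' : ℝ, U' = ⨆ j : Fin (n+1), u j.castSucc := ⟨_, rfl⟩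
  have hUb : ∀ j, u j ≤ U := fun j => hU ▸ le_ciSup ((Set.finite_range u).bddAbove) j
  have hU'b : ∀ j : Fin (n+1), u j.castSucc ≤ U' := fun j =>
    hU' ▸ le_ciSup (f := fun j : Fin (n+1) => u j.castSucc) ((Set.finite_range _).bddAbove) j
  have hU'0 : 0 ≤ U' := le_trans (hu0 _) (hU'b 0)
  have hU0 : 0 ≤ U := le_trans (hu0 0) (hUb 0)
  have hmemU : ∀ q ∈ G, ∃ j, q ∈ f j '' G := by
    intro q hq
    rw [hGfix] at hq
    exact Set.mem_iUnion.1 hq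
  -- recursion B
  have hrecB : ∀ k, u k ≤ s k * (M + U) := by
    intro k
    apply husup
    rintro _ ⟨q, hq, rfl⟩
    obtain ⟨j, hj⟩ := hmemU q hq
    have t1 : |(f k q).1 - (γ k).1| + θ * |(f k q).2 - (γ k).2| ≤
        s k * (|q.1 - (γ k).1| + θ * |q.2 - (γ k).2|) := by
      have h5 := hct k q (γ k)
      rwa [hγfix k] at h5
    have t2 := rho_triangle hθpos.le q (γ j) (γ k)
    have t3 := hub j q hj
    have t4 := hMle j k
    have t5 := hUb j
    calc |(f k q).1 - (γ k).1| + θ * |(f k q).2 - (γ k).2|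
        ≤ s k * (|q.1 - (γ k).1| + θ * |q.2 - (γ k).2|) := t1
      _ ≤ s k * (M + U) := mul_le_mul_of_nonneg_left (by linarith) (hs0 k)
  -- recursion A (for the last index, with the refined choice of j)
  have hrecA : u (Fin.last (n+1)) ≤ σ * max (u (Fin.last (n+1))) (M + U') := by
    apply husup
    rintro _ ⟨q, hq, rfl⟩
    obtain ⟨j, hj⟩ := hmemU q hq
    have t1 : |(f (Fin.last (n+1)) q).1 - (γ (Fin.last (n+1))).1| +
        θ * |(f (Fin.last (n+1)) q).2 - (γ (Fin.last (n+1))).2| ≤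
        σ * (|q.1 - (γ (Fin.last (n+1))).1| + θ * |q.2 - (γ (Fin.last (n+1))).2|) := by
      have h5 := hct (Fin.last (n+1)) q (γ (Fin.last (n+1)))
      rwa [hγfix] at h5
    have t5 : |q.1 - (γ (Fin.last (n+1))).1| + θ * |q.2 - (γ (Fin.last (n+1))).2| ≤
        max (u (Fin.last (n+1))) (M + U') := by
      rcases eq_or_ne j (Fin.last (n+1)) with rfl | hne
      · exact le_max_of_le_left (hub _ q hj)
      · obtain ⟨i, rfl⟩ : ∃ i : Fin (n+1), j = i.castSucc :=
          ⟨j.castPred hne, (Fin.castSucc_castPred j hne).symm⟩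
        refine le_max_of_le_right ?_
        have t2 := rho_triangle hθpos.le q (γ i.castSucc) (γ (Fin.last (n+1)))
        have t3 := hub _ q hj
        have t4 := hMle i.castSucc (Fin.last (n+1))
        have t6 := hU'b i
        linarith
    calc |(f (Fin.last (n+1)) q).1 - (γ (Fin.last (n+1))).1| +
        θ * |(f (Fin.last (n+1)) q).2 - (γ (Fin.last (n+1))).2|
        ≤ σ * (|q.1 - (γ (Fin.last (n+1))).1| + θ * |q.2 - (γ (Fin.last (n+1))).2|) := t1
      _ ≤ σ * max (u (Fin.last (n+1))) (M + U') := mul_le_mul_of_nonneg_left t5 hσ0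
  -- step 1 : u N ≤ σ * (M + U')
  have huN : u (Fin.last (n+1)) ≤ σ * (M + U') :=
    fif_step1 hσ0 hσ1 (hu0 _) hM0 hU'0 hrecA
  -- step 2 : U' ≤ τ * (M + U)
  have hU'rec : U' ≤ τ * (M + U) := by
    rw [hU']
    apply ciSup_le
    intro j
    calc u j.castSucc ≤ s j.castSucc * (M + U) := hrecB _
      _ ≤ τ * (M + U) := by
          apply mul_le_mul_of_nonneg_right _ (by linarith)
          exact hmono (Fin.castSucc_le_castSucc_iff.mpr (Fin.le_last j))
  -- step 3 : U ≤ max U' (u N)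
  have hUle : U ≤ max U' (u (Fin.last (n+1))) := by
    rw [hU]
    apply ciSup_le
    intro j
    rcases eq_or_ne j (Fin.last (n+1)) with rfl | hne
    · exact le_max_right _ _
    · obtain ⟨i, rfl⟩ : ∃ i : Fin (n+1), j = i.castSucc :=
        ⟨j.castPred hne, (Fin.castSucc_castPred j hne).symm⟩
      exact le_max_of_le_left (hU'b i)
  -- step 4 : U' * (1 - τσ) ≤ τ M (1+σ)
  have hU'fin : U' * (1 - τ * σ) ≤ τ * M * (1 + σ) :=
    fif_step4 hτ0 hσ0 hτσle hσ1 hM0 hU'0 hU'rec hUle huN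
  -- step 5 : u N * (1 - τσ) ≤ σ M (1+τ)
  have huNfin : u (Fin.last (n+1)) * (1 - τ * σ) ≤ σ * M * (1 + τ) :=
    fif_step5 hσ0 h1 hU'fin huN
  -- step 6 : U * (1 - τσ) ≤ σ M (1+τ)
  have hUfin : U * (1 - τ * σ) ≤ σ * M * (1 + τ) :=
    fif_step6 h1 hM0 hτσle hU'fin huNfin hUle
  -- step 7 : per-index bound for k = i.castSucc
  have hukfin : ∀ i : Fin (n+1), u i.castSucc * (1 - τ * σ) ≤ M * s i.castSucc * (1 + σ) :=
    fun i => fif_step7 h1 (hs0 i.castSucc) (hrecB i.castSucc) hUfin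
  -- final
  intro p hp
  obtain ⟨k, hk⟩ := hmemU p hp
  have hyk : θ * |p.2 - (γ k).2| ≤ u k :=
    le_trans (by linarith [abs_nonneg (p.1 - (γ k).1)]) (hub k p hk)
  have hθτσ : 0 < θ * (1 - τ * σ) := mul_pos hθpos h1
  rcases eq_or_ne k (Fin.last (n+1)) with rfl | hne
  · have hbound : |p.2 - (γ (Fin.last (n+1))).2| ≤ M * σ * (1 + τ) / (θ * (1 - τ * σ)) := by
      rw [le_div_iff₀ hθτσ]
      exact fif_bnd h1.le hyk (le_trans huNfin (le_of_eq (by ring)))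
    have hAle : A ≤ (γ (Fin.last (n+1))).2 - M * σ * (1 + τ) / (θ * (1 - τ * σ)) := by
      rw [hA, hγ]
      exact min_le_right _ _
    have hBge : (γ (Fin.last (n+1))).2 + M * σ * (1 + τ) / (θ * (1 - τ * σ)) ≤ B := by
      rw [hB, hγ]
      exact le_max_right _ _
    obtain ⟨hb1, hb2⟩ := abs_le.1 hbound
    constructor <;> linarith
  · obtain ⟨i, rfl⟩ : ∃ i : Fin (n+1), k = i.castSucc :=
      ⟨k.castPred hne, (Fin.castSucc_castPred k hne).symm⟩
    have hbound : |p.2 - (γ i.castSucc).2| ≤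
        M * s i.castSucc * (1 + σ) / (θ * (1 - τ * σ)) := by
      rw [le_div_iff₀ hθτσ]
      exact fif_bnd h1.le hyk (hukfin i)
    have hAle : A ≤ (γ i.castSucc).2 - M * s i.castSucc * (1 + σ) / (θ * (1 - τ * σ)) := by
      rw [hA, hγ]
      exact le_trans (min_le_left _ _)
        (ciInf_le (f := fun k : Fin (n+1) =>
          b k.castSucc * c k.castSucc / ((1 - a k.castSucc) * (1 - d k.castSucc)) +
          e k.castSucc / (1 - d k.castSucc) -
          M * s k.castSucc * (1 + σ) / (θ * (1 - τ * σ)))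
          ((Set.finite_range _).bddBelow) i)
    have hBge : (γ i.castSucc).2 + M * s i.castSucc * (1 + σ) / (θ * (1 - τ * σ)) ≤ B := by
      rw [hB, hγ]
      exact le_trans
        (le_ciSup (f := fun k : Fin (n+1) =>
          b k.castSucc * c k.castSucc / ((1 - a k.castSucc) * (1 - d k.castSucc)) +
          e k.castSucc / (1 - d k.castSucc) +
          M * s k.castSucc * (1 + σ) / (θ * (1 - τ * σ)))
          ((Set.finite_range _).bddAbove) i) (le_max_left _ _)
    obtain ⟨hb1, hb2⟩ := abs_le.1 hbound
    constructor <;> linarith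
end

section
/- In the affine FIF framework with n ≥ 2 interpolation points, with A and B defined as in the range estimate (Theorem on the range of f), if G is a nonempty compact subset of ℝ² with G = ⋃_{k=1}^{n} f_k(G), then G ⊆ [x₀, xₙ] × [A, B]; in particular the graph of the affine fractal interpolation function f is contained in [a,b] × [A,B]. -/
/-- The auxiliary "taxicab-like" metric used in the affine FIF framework. -/
def fifRho (θ : ℝ) (p q : ℝ × ℝ) : ℝ := |p.1 - q.1| + θ * |p.2 - q.2|

lemma fifRho_self (θ : ℝ) (p : ℝ × ℝ) : fifRho θ p p = 0 := by
  simp [fifRho]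

lemma fifRho_triangle {θ : ℝ} (hθ : 0 ≤ θ) (p q r : ℝ × ℝ) :
    fifRho θ p r ≤ fifRho θ p q + fifRho θ q r := by
  unfold fifRho
  have h1 := abs_sub_le p.1 q.1 r.1
  have h2 := abs_sub_le p.2 q.2 r.2
  nlinarith [mul_le_mul_of_nonneg_left h2 hθ]

set_option maxHeartbeats 2000000 in
/-- In the affine FIF framework with `n + 2 ≥ 2` maps, with `A`
and `B` defined as in the range estimate, any nonempty compact `G ⊆ ℝ²` with
`G = ⋃_k f_k(G)` — in particular the graph of the affine fractal interpolation
function — is contained in the rectangle `[x₀, x_N] × [A, B]`. -/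
theorem fif_graph_in_rectangle
    (n : ℕ) (x y : Fin (n + 3) → ℝ) (hx : StrictMono x)
    (d : Fin (n + 2) → ℝ) (hd : ∀ k, 0 ≤ d k ∧ d k < 1)
    (a b c e : Fin (n + 2) → ℝ)
    (ha : ∀ k, a k = (x k.succ - x k.castSucc) / (x (Fin.last (n + 2)) - x 0))
    (hb : ∀ k, b k = (x (Fin.last (n + 2)) * x k.castSucc - x 0 * x k.succ) /
        (x (Fin.last (n + 2)) - x 0))
    (hc : ∀ k, c k = (y k.succ - y k.castSucc) / (x (Fin.last (n + 2)) - x 0) -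
        d k * (y (Fin.last (n + 2)) - y 0) / (x (Fin.last (n + 2)) - x 0))
    (he : ∀ k, e k = (x (Fin.last (n + 2)) * y k.castSucc - x 0 * y k.succ) /
        (x (Fin.last (n + 2)) - x 0) -
        d k * (x (Fin.last (n + 2)) * y 0 - x 0 * y (Fin.last (n + 2))) /
        (x (Fin.last (n + 2)) - x 0))
    (θ : ℝ)
    (hθ : θ = if ∀ k, c k = 0 then 1 else (1 - ⨆ k, a k) / (2 * ⨆ k, |c k|))
    (f : Fin (n + 2) → ℝ × ℝ → ℝ × ℝ)
    (hf : ∀ k (p : ℝ × ℝ), f k p = (a k * p.1 + b k, c k * p.1 + d k * p.2 + e k))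
    (s : Fin (n + 2) → ℝ)
    (hs : ∀ k, s k = max (d k) (a k + θ * |c k|))
    (hmono : Monotone s)
    (γ : Fin (n + 2) → ℝ × ℝ)
    (hγ : ∀ k, γ k = (b k / (1 - a k),
        b k * c k / ((1 - a k) * (1 - d k)) + e k / (1 - d k)))
    (M : ℝ)
    (hM : M = ⨆ p : Fin (n + 2) × Fin (n + 2),
        (|(γ p.1).1 - (γ p.2).1| + θ * |(γ p.1).2 - (γ p.2).2|))
    (A B : ℝ)
    (hA : A = min
      (⨅ k : Fin (n + 1),
        (b k.castSucc * c k.castSucc /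
            ((1 - a k.castSucc) * (1 - d k.castSucc)) +
          e k.castSucc / (1 - d k.castSucc) -
          M * s k.castSucc * (1 + s (Fin.last (n + 1))) /
            (θ * (1 - s ((Fin.last n).castSucc) * s (Fin.last (n + 1))))))
      (b (Fin.last (n + 1)) * c (Fin.last (n + 1)) /
          ((1 - a (Fin.last (n + 1))) * (1 - d (Fin.last (n + 1)))) +
        e (Fin.last (n + 1)) / (1 - d (Fin.last (n + 1))) -
        M * s (Fin.last (n + 1)) * (1 + s ((Fin.last n).castSucc)) /
          (θ * (1 - s ((Fin.last n).castSucc) * s (Fin.last (n + 1))))))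
    (hB : B = max
      (⨆ k : Fin (n + 1),
        (b k.castSucc * c k.castSucc /
            ((1 - a k.castSucc) * (1 - d k.castSucc)) +
          e k.castSucc / (1 - d k.castSucc) +
          M * s k.castSucc * (1 + s (Fin.last (n + 1))) /
            (θ * (1 - s ((Fin.last n).castSucc) * s (Fin.last (n + 1))))))
      (b (Fin.last (n + 1)) * c (Fin.last (n + 1)) /
          ((1 - a (Fin.last (n + 1))) * (1 - d (Fin.last (n + 1)))) +
        e (Fin.last (n + 1)) / (1 - d (Fin.last (n + 1))) +
        M * s (Fin.last (n + 1)) * (1 + s ((Fin.last n).castSucc)) /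
          (θ * (1 - s ((Fin.last n).castSucc) * s (Fin.last (n + 1))))))
    (G : Set (ℝ × ℝ)) (hG : G.Nonempty) (hGc : IsCompact G)
    (hGfix : G = ⋃ k, f k '' G) :
    G ⊆ Set.Icc (x 0) (x (Fin.last (n + 2))) ×ˢ Set.Icc A B := by
  -- Notation
  set N : Fin (n + 2) := Fin.last (n + 1) with hN
  set P : Fin (n + 2) := (Fin.last n).castSucc with hP
  -- basic positivity facts
  have hxpos : (0:ℝ) < x (Fin.last (n + 2)) - x 0 := by
    have : (0 : Fin (n+3)) < Fin.last (n+2) := by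
      rw [Fin.lt_def]; simp
    linarith [hx this]
  have ha0 : ∀ k, 0 < a k := by
    intro k
    rw [ha k]
    apply div_pos _ hxpos
    have : (k.castSucc : Fin (n+3)) < k.succ := Fin.castSucc_lt_succ
    linarith [hx this]
  have ha1 : ∀ k, a k < 1 := by
    intro k
    rw [ha k]
    rw [div_lt_one hxpos]
    have h1 : x 0 ≤ x k.castSucc := hx.monotone (Fin.zero_le _)
    have h2 : x k.succ ≤ x (Fin.last (n+2)) := hx.monotone (Fin.le_last _)
    by_cases hk : k.castSucc = 0
    · have hk0 : k = 0 := by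
        apply Fin.ext
        simpa using congrArg Fin.val hk
      have : (k.succ : Fin (n+3)) < Fin.last (n+2) := by
        rw [hk0, Fin.lt_def]; simp
      linarith [hx this]
    · have : (0 : Fin (n+3)) < k.castSucc := Fin.pos_of_ne_zero hk
      linarith [hx this]
  -- θ is positive and the shear part of each contraction factor is < 1
  have hθs : 0 < θ ∧ ∀ k, a k + θ * |c k| < 1 := by
    by_cases hall : ∀ k, c k = 0
    · rw [hθ, if_pos hall]
      refine ⟨one_pos, fun k => ?_⟩
      rw [hall k]
      simpa using ha1 k
    · rw [hθ, if_neg hall]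
      push_neg at hall
      obtain ⟨k₀, hk₀⟩ := hall
      obtain ⟨m, hmax⟩ := Finite.exists_max a
      have hSa1 : (⨆ k, a k) < 1 := lt_of_le_of_lt (ciSup_le hmax) (ha1 m)
      have hSa0 : 0 < (⨆ k, a k) :=
        lt_of_lt_of_le (ha0 m) (le_ciSup (Set.Finite.bddAbove (Set.finite_range a)) m)
      have hSc0 : 0 < ⨆ k, |c k| :=
        lt_of_lt_of_le (abs_pos.2 hk₀)
          (le_ciSup (Set.Finite.bddAbove (Set.finite_range fun k => |c k|)) k₀)
      constructor
      · apply div_pos (by linarith) (by linarith)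
      · intro k
        have h1 : a k ≤ ⨆ k, a k :=
          le_ciSup (Set.Finite.bddAbove (Set.finite_range a)) k
        have h2 : |c k| ≤ ⨆ k, |c k| :=
          le_ciSup (Set.Finite.bddAbove (Set.finite_range fun k => |c k|)) k
        have h3 : (1 - ⨆ k, a k) / (2 * ⨆ k, |c k|) * |c k| ≤ (1 - ⨆ k, a k) / 2 := by
          rw [div_mul_eq_mul_div, div_le_div_iff₀ (by linarith) two_pos]
          nlinarith
        linarith
  have hθpos : 0 < θ := hθs.1
  have hs1 : ∀ k, s k < 1 := by
    intro k
    rw [hs]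
    exact max_lt (hd k).2 (hθs.2 k)
  have hs0 : ∀ k, 0 ≤ s k := by
    intro k
    rw [hs]
    exact le_trans (hd k).1 (le_max_left _ _)
  have hsPN : s P ≤ s N := hmono (by rw [hP, hN, Fin.le_def]; simp)
  have hsle : ∀ j : Fin (n+2), j ≠ N → s j ≤ s P := by
    intro j hj
    apply hmono
    have hjv : (j:ℕ) ≠ n+1 := fun hh => hj (Fin.ext (by rw [hN]; simpa using hh))
    have := j.isLt
    rw [hP, Fin.le_def]; simp; omega
  have hΔ : 0 < 1 - s P * s N := by
    nlinarith [hs0 P, hs0 N, hs1 P, hs1 N]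
  -- bound constants
  set C : Fin (n+2) → ℝ := fun k =>
    if k = N then M * s N * (1 + s P) / (1 - s P * s N)
    else M * s k * (1 + s N) / (1 - s P * s N) with hC
  -- M facts
  have hMb : ∀ i j, fifRho θ (γ i) (γ j) ≤ M := by
    intro i j
    rw [hM]
    exact le_ciSup (f := fun p : Fin (n + 2) × Fin (n + 2) =>
        |(γ p.1).1 - (γ p.2).1| + θ * |(γ p.1).2 - (γ p.2).2|)
      (Set.Finite.bddAbove (Set.finite_range _)) (i, j)
  have hM0 : 0 ≤ M := by
    have := hMb 0 0
    rw [fifRho_self] at this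
    exact this
  have hC0 : ∀ k, 0 ≤ C k := by
    intro k
    rw [hC]
    dsimp only
    split
    · exact div_nonneg (mul_nonneg (mul_nonneg hM0 (hs0 N)) (by linarith [hs0 P])) hΔ.le
    · exact div_nonneg (mul_nonneg (mul_nonneg hM0 (hs0 k)) (by linarith [hs0 N])) hΔ.le
  have hCN : C N = M * s N * (1 + s P) / (1 - s P * s N) := by
    rw [hC]; dsimp only; rw [if_pos rfl]
  have hCne : ∀ k, k ≠ N → C k = M * s k * (1 + s N) / (1 - s P * s N) := by
    intro k hk
    rw [hC]; dsimp only; rw [if_neg hk]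
  have hPN : P ≠ N := by
    simp [hP, hN, Fin.ext_iff]
  have hCleN : ∀ j, C j ≤ C N := by
    intro j
    by_cases hj : j = N
    · rw [hj]
    · rw [hCne j hj, hCN]
      apply div_le_div_of_nonneg_right _ hΔ.le
      have e1 : M * s j * (1 + s N) ≤ M * s P * (1 + s N) :=
        mul_le_mul_of_nonneg_right (mul_le_mul_of_nonneg_left (hsle j hj) hM0)
          (by linarith [hs0 N])
      have e2 : M * s P * (1 + s N) ≤ M * s N * (1 + s P) := by
        nlinarith [mul_nonneg hM0 (sub_nonneg.2 hsPN)]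
      linarith
  have hCleP : ∀ j, j ≠ N → C j ≤ C P := by
    intro j hj
    rw [hCne j hj, hCne P hPN]
    apply div_le_div_of_nonneg_right _ hΔ.le
    exact mul_le_mul_of_nonneg_right (mul_le_mul_of_nonneg_left (hsle j hj) hM0)
      (by linarith [hs0 N])
  -- the key recursive inequality
  have hkey : ∀ j k : Fin (n+2), j ≠ k → s k * (C j + M) ≤ C k := by
    intro j k hjk
    by_cases hk : k = N
    · subst hk
      have h1 : C j ≤ C P := hCleP j hjk
      have heq : s N * (C P + M) = C N := by
        rw [hCne P hPN, hCN]
        rw [div_add' _ _ _ hΔ.ne', mul_div_assoc']; congr 1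
        ring
      calc s N * (C j + M) ≤ s N * (C P + M) := by nlinarith [hs0 N]
        _ = C N := heq
    · have h1 : C j ≤ C N := hCleN j
      have heq : s k * (C N + M) = C k := by
        rw [hCN, hCne k hk]
        rw [div_add' _ _ _ hΔ.ne', mul_div_assoc']; congr 1
        ring
      calc s k * (C j + M) ≤ s k * (C N + M) := by nlinarith [hs0 k]
        _ = C k := heq
  -- continuity of the maps
  have hcont : ∀ k, Continuous (f k) := by
    intro k
    have : f k = fun p : ℝ × ℝ => (a k * p.1 + b k, c k * p.1 + d k * p.2 + e k) :=
      funext (hf k)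
    rw [this]; fun_prop
  -- maximizers of fifRho θ · (γ k) on f k '' G
  have hrex : ∀ k, ∃ p ∈ f k '' G, ∀ q ∈ f k '' G, fifRho θ q (γ k) ≤ fifRho θ p (γ k) := by
    intro k
    have hcomp : IsCompact (f k '' G) := hGc.image (hcont k)
    have hne : (f k '' G).Nonempty := hG.image _
    obtain ⟨p, hp, hmax⟩ := hcomp.exists_isMaxOn hne
      (Continuous.continuousOn (f := fun q : ℝ × ℝ => fifRho θ q (γ k))
        (by unfold fifRho; fun_prop))
    exact ⟨p, hp, fun q hq => hmax hq⟩
  choose p hpmem hpmax using hrex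
  set r : Fin (n+2) → ℝ := fun k => fifRho θ (p k) (γ k) with hr
  -- fixed points
  have hd1 : ∀ k, (1:ℝ) - d k ≠ 0 := fun k => by linarith [(hd k).2]
  have ha1' : ∀ k, (1:ℝ) - a k ≠ 0 := fun k => by linarith [ha1 k]
  have hfix : ∀ k, f k (γ k) = γ k := by
    intro k
    have h1 := ha1' k
    have h2 := hd1 k
    rw [hf, hγ]
    rw [Prod.ext_iff]
    constructor
    · dsimp only
      field_simp
      ring
    · dsimp only
      field_simp
      ring
  -- contraction estimate
  have hcontr : ∀ k (q q' : ℝ × ℝ), fifRho θ (f k q) (f k q') ≤ s k * fifRho θ q q' := by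
    intro k q q'
    rw [hf, hf]
    unfold fifRho
    dsimp only
    have e1 : a k * q.1 + b k - (a k * q'.1 + b k) = a k * (q.1 - q'.1) := by ring
    have e2 : c k * q.1 + d k * q.2 + e k - (c k * q'.1 + d k * q'.2 + e k)
        = c k * (q.1 - q'.1) + d k * (q.2 - q'.2) := by ring
    rw [e1, e2]
    have h1 : |a k * (q.1 - q'.1)| = a k * |q.1 - q'.1| := by
      rw [abs_mul, abs_of_pos (ha0 k)]
    have h2 : |c k * (q.1 - q'.1) + d k * (q.2 - q'.2)|
        ≤ |c k| * |q.1 - q'.1| + d k * |q.2 - q'.2| := by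
      calc _ ≤ |c k * (q.1 - q'.1)| + |d k * (q.2 - q'.2)| := abs_add_le _ _
        _ = |c k| * |q.1 - q'.1| + d k * |q.2 - q'.2| := by
            rw [abs_mul, abs_mul, abs_of_nonneg (hd k).1]
    have hsk1 : a k + θ * |c k| ≤ s k := by rw [hs]; exact le_max_right _ _
    have hsk2 : d k ≤ s k := by rw [hs]; exact le_max_left _ _
    have hu : 0 ≤ |q.1 - q'.1| := abs_nonneg _
    have hv : 0 ≤ |q.2 - q'.2| := abs_nonneg _
    rw [h1]
    nlinarith [mul_le_mul_of_nonneg_left h2 hθpos.le,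
      mul_le_mul_of_nonneg_right hsk1 hu,
      mul_le_mul_of_nonneg_right hsk2 (mul_nonneg hθpos.le hv)]
  -- the range estimate: r k ≤ C k
  have hrC : ∀ k, r k ≤ C k := by
    by_contra hcon
    push_neg at hcon
    obtain ⟨k₀, hk₀⟩ := hcon
    obtain ⟨m, hm⟩ := Finite.exists_max (fun k => r k - C k)
    have hmpos : 0 < r m - C m := lt_of_lt_of_le (sub_pos.2 hk₀) (hm k₀)
    obtain ⟨q, hqG, hq⟩ := hpmem m
    have hqU : q ∈ ⋃ j, f j '' G := hGfix ▸ hqG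
    obtain ⟨j, hqj⟩ := Set.mem_iUnion.1 hqU
    have h1 : r m ≤ s m * fifRho θ q (γ m) := by
      have heq : r m = fifRho θ (f m q) (f m (γ m)) := by rw [hfix, hr, hq]
      rw [heq]
      exact hcontr m q (γ m)
    have h3 : fifRho θ q (γ j) ≤ r j := hpmax j q hqj
    by_cases hjm : j = m
    · subst hjm
      have hr0 : 0 < r j := lt_of_le_of_lt (hC0 j) (by linarith)
      nlinarith [mul_le_mul_of_nonneg_left h3 (hs0 j), mul_lt_mul_of_pos_right (hs1 j) hr0]
    · have h2 : fifRho θ q (γ m) ≤ fifRho θ q (γ j) + fifRho θ (γ j) (γ m) :=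
        fifRho_triangle hθpos.le _ _ _
      have h4 : fifRho θ (γ j) (γ m) ≤ M := hMb j m
      have h5 : r j ≤ C j + (r m - C m) := by linarith [hm j]
      have h6 := hkey j m hjm
      nlinarith [mul_le_mul_of_nonneg_left
          (by linarith : fifRho θ q (γ m) ≤ C j + M + (r m - C m)) (hs0 m),
        mul_lt_mul_of_pos_right (hs1 m) hmpos]
  -- first coordinate bounds via fixed-point comparison
  have hbub : ∀ k, b k ≤ (1 - a k) * x (Fin.last (n+2)) := by
    intro k
    rw [ha, hb]
    have h1 : x 0 ≤ x k.castSucc := hx.monotone (Fin.zero_le _)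
    have h2 : x k.succ ≤ x (Fin.last (n+2)) := hx.monotone (Fin.le_last _)
    rw [div_le_iff₀ hxpos] at *
    have key : (0:ℝ) ≤ (x (Fin.last (n+2)) - x k.succ) * (x (Fin.last (n+2)) - x 0) :=
      mul_nonneg (by linarith) hxpos.le
    field_simp
    nlinarith
  have hblb : ∀ k, (1 - a k) * x 0 ≤ b k := by
    intro k
    rw [ha, hb]
    have h1 : x 0 ≤ x k.castSucc := hx.monotone (Fin.zero_le _)
    have key : (0:ℝ) ≤ (x k.castSucc - x 0) * (x (Fin.last (n+2)) - x 0) :=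
      mul_nonneg (by linarith) hxpos.le
    rw [le_div_iff₀ hxpos]
    field_simp
    nlinarith
  have hxub : ∀ z ∈ G, z.1 ≤ x (Fin.last (n + 2)) := by
    obtain ⟨Pm, hPmG, hPmax⟩ := hGc.exists_isMaxOn hG continuous_fst.continuousOn
    intro z hz
    have hz1 : z.1 ≤ Pm.1 := hPmax hz
    have hPU : Pm ∈ ⋃ j, f j '' G := hGfix ▸ hPmG
    obtain ⟨k, hk⟩ := Set.mem_iUnion.1 hPU
    obtain ⟨q, hqG, hq⟩ := hk
    have h1 : Pm.1 = a k * q.1 + b k := by rw [← hq, hf]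
    have h2 : q.1 ≤ Pm.1 := hPmax hqG
    have h3 : a k * q.1 ≤ a k * Pm.1 := mul_le_mul_of_nonneg_left h2 (ha0 k).le
    have h4 := hbub k
    have h5 := ha1 k
    nlinarith
  have hxlb : ∀ z ∈ G, x 0 ≤ z.1 := by
    obtain ⟨Pm, hPmG, hPmax⟩ := hGc.exists_isMinOn hG continuous_fst.continuousOn
    intro z hz
    have hz1 : Pm.1 ≤ z.1 := hPmax hz
    have hPU : Pm ∈ ⋃ j, f j '' G := hGfix ▸ hPmG
    obtain ⟨k, hk⟩ := Set.mem_iUnion.1 hPU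
    obtain ⟨q, hqG, hq⟩ := hk
    have h1 : Pm.1 = a k * q.1 + b k := by rw [← hq, hf]
    have h2 : Pm.1 ≤ q.1 := hPmax hqG
    have h3 : a k * Pm.1 ≤ a k * q.1 := mul_le_mul_of_nonneg_left h2 (ha0 k).le
    have h4 := hblb k
    have h5 := ha1 k
    nlinarith
  -- second coordinate: A, B bounds around the fixed points
  have hHk : ∀ k, (γ k).2 = b k * c k / ((1 - a k) * (1 - d k)) + e k / (1 - d k) := by
    intro k; rw [hγ]
  have hCθ : ∀ k, k ≠ N → C k / θ = M * s k * (1 + s N) / (θ * (1 - s P * s N)) := by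
    intro k hk
    rw [hCne k hk, div_div, mul_comm (1 - s P * s N) θ]
  have hCθN : C N / θ = M * s N * (1 + s P) / (θ * (1 - s P * s N)) := by
    rw [hCN, div_div, mul_comm (1 - s P * s N) θ]
  have hAk : ∀ k, A ≤ (γ k).2 - C k / θ := by
    intro k
    by_cases hk : k = N
    · subst hk
      rw [hHk, hCθN, hA]
      exact min_le_right _ _
    · obtain ⟨k', hk'⟩ := Fin.exists_castSucc_eq.2 hk
      subst hk'
      rw [hHk, hCθ _ hk, hA]
      exact le_trans (min_le_left _ _)
        (ciInf_le (Set.Finite.bddBelow (Set.finite_range _)) k')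
  have hBk : ∀ k, (γ k).2 + C k / θ ≤ B := by
    intro k
    by_cases hk : k = N
    · subst hk
      rw [hHk, hCθN, hB]
      exact le_max_right _ _
    · obtain ⟨k', hk'⟩ := Fin.exists_castSucc_eq.2 hk
      subst hk'
      rw [hHk, hCθ _ hk, hB]
      refine le_trans ?_ (le_max_left _ _)
      apply le_ciSup (Set.Finite.bddAbove (Set.finite_range _)) k'
  -- final assembly
  intro z hz
  have hzU : z ∈ ⋃ j, f j '' G := hGfix ▸ hz
  obtain ⟨k, hzk⟩ := Set.mem_iUnion.1 hzU
  have h1 : fifRho θ z (γ k) ≤ C k := le_trans (hpmax k z hzk) (hrC k)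
  have h2 : θ * |z.2 - (γ k).2| ≤ C k := by
    unfold fifRho at h1
    linarith [abs_nonneg (z.1 - (γ k).1)]
  have h3 : |z.2 - (γ k).2| ≤ C k / θ := by
    rw [le_div_iff₀ hθpos]
    linarith [h2]
  obtain ⟨h4, h5⟩ := abs_le.1 h3
  refine ⟨⟨hxlb z hz, hxub z hz⟩, ?_, ?_⟩
  · have := hAk k
    linarith
  · have := hBk k
    linarith
end

section
/- Let (X,d) be a complete metric space, let n ≥ 1, and let f₁,…,fₙ : X → X be maps such that each fᵢ is Lipschitz with constant sᵢ < 1; set s = maxᵢ sᵢ. Let A be the attractor, i.e. the unique nonempty compact set with A = ⋃ᵢ fᵢ(A). For each m ∈ ℕ and each word w = (k₁,…,k_m) ∈ {1,…,n}^m, let γ_w denote the unique fixed point of the composition f_{k₁} ∘ … ∘ f_{k_m}, let M_m = max over pairs of words w, w' of length m of d(γ_w, γ_{w'}), and define C_m = ⋃_{w ∈ {1,…,n}^m} B[γ_w, M_m s^m (1+s^m)/(1−s^{2m})]. Then A ⊆ C_m for every m, and the Hausdorff–Pompeiu distance h(C_m, A) tends to 0 as m → ∞. -/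
private lemma foldr_lip {X : Type*} [MetricSpace X] {s : ℝ} (hs0 : 0 ≤ s) :
    ∀ (L : List (X → X)), (∀ g ∈ L, ∀ p q : X, dist (g p) (g q) ≤ s * dist p q) →
    ∀ p q : X, dist (L.foldr (· ∘ ·) id p) (L.foldr (· ∘ ·) id q) ≤ s ^ L.length * dist p q := by
  intro L
  induction L with
  | nil => intro _ p q; simp
  | cons a L ih =>
    intro h p q
    have h2 := ih (fun g hg => h g (List.mem_cons_of_mem _ hg)) p q
    calc dist (List.foldr (· ∘ ·) id (a :: L) p) (List.foldr (· ∘ ·) id (a :: L) q)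
        = dist (a (List.foldr (· ∘ ·) id L p)) (a (List.foldr (· ∘ ·) id L q)) := rfl
      _ ≤ s * dist (List.foldr (· ∘ ·) id L p) (List.foldr (· ∘ ·) id L q) :=
          h a (List.mem_cons_self) _ _
      _ ≤ s * (s ^ L.length * dist p q) := mul_le_mul_of_nonneg_left h2 hs0
      _ = s ^ (a :: L).length * dist p q := by rw [List.length_cons]; ring

private lemma foldr_mem {X : Type*} {A : Set X} :
    ∀ (L : List (X → X)), (∀ g ∈ L, ∀ x ∈ A, g x ∈ A) → ∀ x ∈ A, L.foldr (· ∘ ·) id x ∈ A := by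
  intro L
  induction L with
  | nil => intro _ x hx; simpa
  | cons a L ih =>
    intro h x hx
    exact h a (List.mem_cons_self) _ (ih (fun g hg => h g (List.mem_cons_of_mem _ hg)) x hx)

private lemma fixedPoint_mem {X : Type*} [MetricSpace X] {A : Set X} (hAc : IsCompact A)
    (hA : A.Nonempty) {g : X → X} {c : ℝ} (hc0 : 0 ≤ c) (hc1 : c < 1)
    (hg : ∀ p q, dist (g p) (g q) ≤ c * dist p q) (hgA : ∀ x ∈ A, g x ∈ A)
    {γ : X} (hγ : g γ = γ) : γ ∈ A := by
  obtain ⟨a, ha⟩ := hA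
  have hiter : ∀ k, ∀ p q : X, dist (g^[k] p) (g^[k] q) ≤ c ^ k * dist p q := by
    intro k
    induction k with
    | zero => simp
    | succ k ih =>
      intro p q
      rw [Function.iterate_succ_apply', Function.iterate_succ_apply']
      calc dist (g (g^[k] p)) (g (g^[k] q)) ≤ c * dist (g^[k] p) (g^[k] q) := hg _ _
        _ ≤ c * (c ^ k * dist p q) := mul_le_mul_of_nonneg_left (ih p q) hc0
        _ = c ^ (k + 1) * dist p q := by ring
  have hmem : ∀ k, g^[k] a ∈ A := by
    intro k; induction k with
    | zero => simpa
    | succ k ih => rw [Function.iterate_succ_apply']; exact hgA _ ih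
  have hfix : ∀ k, g^[k] γ = γ := by
    intro k; induction k with
    | zero => rfl
    | succ k ih => rw [Function.iterate_succ_apply', ih, hγ]
  have htend : Filter.Tendsto (fun k => g^[k] a) Filter.atTop (nhds γ) := by
    rw [tendsto_iff_dist_tendsto_zero]
    apply squeeze_zero (fun k => dist_nonneg)
      (fun k => by
        calc dist (g^[k] a) γ = dist (g^[k] a) (g^[k] γ) := by rw [hfix]
          _ ≤ c ^ k * dist a γ := hiter k a γ)
    simpa using (tendsto_pow_atTop_nhds_zero_of_lt_one hc0 hc1).mul_const (dist a γ)
  exact hAc.isClosed.mem_of_tendsto htend (Filter.Eventually.of_forall hmem)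

private lemma exists_word {X : Type*} {n : ℕ} (f : Fin (n + 1) → X → X) {A : Set X}
    (hAfix : A = ⋃ i, f i '' A) :
    ∀ (m : ℕ) (a : X), a ∈ A → ∃ (w : Fin (m + 1) → Fin (n + 1)) (b : X), b ∈ A ∧
      (List.ofFn fun j => f (w j)).foldr (· ∘ ·) id b = a := by
  intro m
  induction m with
  | zero =>
    intro a ha
    rw [hAfix] at ha
    simp only [Set.mem_iUnion, Set.mem_image] at ha
    obtain ⟨i, b, hb, hba⟩ := ha
    exact ⟨fun _ => i, b, hb, by simpa using hba⟩
  | succ m ih =>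
    intro a ha
    rw [hAfix] at ha
    simp only [Set.mem_iUnion, Set.mem_image] at ha
    obtain ⟨i, c, hc, hca⟩ := ha
    obtain ⟨v, b, hb, hvb⟩ := ih c hc
    refine ⟨Fin.cons i v, b, hb, ?_⟩
    rw [List.ofFn_succ]
    simp only [List.foldr_cons, Fin.cons_succ, Fin.cons_zero, Function.comp_apply]
    rw [hvb]
    exact hca

/-- For an IFS `f₀, …, fₙ` (`n+1 ≥ 1` maps) on a complete metric
space, each Lipschitz with constant `sᵢ < 1`, with `s = maxᵢ sᵢ`, attractor `A`,
and, for every `m` and every word `w` of length `m+1` (i.e. of length `≥ 1`), fixed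
point `γ m w` of the composition `f_{w 0} ∘ … ∘ f_{w m}`:  setting
`M m = max` over pairs of words of length `m+1` of `d(γ m w, γ m w')` and
`C m = ⋃_w B[γ m w, (M m) s^{m+1} (1+s^{m+1})/(1 − s^{2(m+1)})]`,
we have `A ⊆ C m` for every `m` and `h(C m, A) → 0`. -/
theorem attractor_coverings_converge
    {X : Type*} [MetricSpace X] [CompleteSpace X]
    (n : ℕ) (f : Fin (n + 1) → X → X) (s' : Fin (n + 1) → ℝ)
    (hs' : ∀ i, s' i < 1)
    (hf : ∀ i, ∀ p q : X, dist (f i p) (f i q) ≤ s' i * dist p q)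
    (s : ℝ) (hs : s = ⨆ i, s' i)
    (A : Set X) (hA : A.Nonempty) (hAc : IsCompact A)
    (hAfix : A = ⋃ i, f i '' A)
    (γ : ∀ m : ℕ, (Fin (m + 1) → Fin (n + 1)) → X)
    (hγ : ∀ (m : ℕ) (w : Fin (m + 1) → Fin (n + 1)),
      ((List.ofFn fun j => f (w j)).foldr (· ∘ ·) id) (γ m w) = γ m w)
    (M : ℕ → ℝ)
    (hM : ∀ m : ℕ, M m =
      ⨆ p : (Fin (m + 1) → Fin (n + 1)) × (Fin (m + 1) → Fin (n + 1)),
        dist (γ m p.1) (γ m p.2))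
    (C : ℕ → Set X)
    (hC : ∀ m : ℕ, C m = ⋃ w : Fin (m + 1) → Fin (n + 1),
      Metric.closedBall (γ m w)
        (M m * s ^ (m + 1) * (1 + s ^ (m + 1)) / (1 - s ^ (2 * (m + 1))))) :
    (∀ m : ℕ, A ⊆ C m) ∧
    Filter.Tendsto (fun m => Metric.hausdorffDist (C m) A) Filter.atTop (nhds 0) := by
  obtain ⟨a₀, ha₀⟩ := hA
  by_cases hsub : ∀ p q : X, p = q
  · -- degenerate case: X is a subsingleton
    have hM0 : ∀ m, M m = 0 := by
      intro m
      rw [hM]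
      have h0 : ∀ p : (Fin (m + 1) → Fin (n + 1)) × (Fin (m + 1) → Fin (n + 1)),
          dist (γ m p.1) (γ m p.2) = 0 := fun p => by
        rw [hsub (γ m p.1) (γ m p.2), dist_self]
      simp only [h0]
      exact ciSup_const
    have hCA : ∀ m, C m = A := by
      intro m
      apply Set.eq_of_subset_of_subset
      · intro x _
        rw [hsub x a₀]; exact ha₀
      · intro x _
        rw [hC]
        refine Set.mem_iUnion.2 ⟨fun _ => 0, ?_⟩
        rw [Metric.mem_closedBall, hM0, hsub x (γ m fun _ => 0), dist_self]
        simp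
    constructor
    · intro m; rw [hCA m]
    · simp only [hCA, Metric.hausdorffDist_self_zero]
      exact tendsto_const_nhds
  · push_neg at hsub
    obtain ⟨p₀, q₀, hpq⟩ := hsub
    have hs'0 : ∀ i, 0 ≤ s' i := by
      intro i
      have hd : 0 < dist p₀ q₀ := dist_pos.2 hpq
      have h1 : (0 : ℝ) ≤ s' i * dist p₀ q₀ := le_trans dist_nonneg (hf i p₀ q₀)
      nlinarith
    have hbdd' : BddAbove (Set.range s') := Set.Finite.bddAbove (Set.finite_range s')
    have hsle : ∀ i, s' i ≤ s := fun i => hs ▸ le_ciSup hbdd' i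
    have hs0 : 0 ≤ s := le_trans (hs'0 0) (hsle 0)
    have hs1 : s < 1 := by
      obtain ⟨i0, hi0⟩ := Finite.exists_max s'
      rw [hs]
      exact lt_of_le_of_lt (ciSup_le hi0) (hs' i0)
    have hfs : ∀ i, ∀ p q : X, dist (f i p) (f i q) ≤ s * dist p q := fun i p q =>
      (hf i p q).trans (mul_le_mul_of_nonneg_right (hsle i) dist_nonneg)
    have hfA : ∀ i, ∀ x ∈ A, f i x ∈ A := by
      intro i x hx
      have h1 : f i x ∈ ⋃ j, f j '' A := Set.mem_iUnion.2 ⟨i, ⟨x, hx, rfl⟩⟩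
      rwa [← hAfix] at h1
    set K := Metric.diam A / (1 - s) with hK
    have main : ∀ m, A ⊆ C m ∧ Metric.hausdorffDist (C m) A ≤ K * s ^ (m + 1) := by
      intro m
      have ht0 : (0 : ℝ) ≤ s ^ (m + 1) := pow_nonneg hs0 _
      have hts : s ^ (m + 1) ≤ s := by
        calc s ^ (m + 1) ≤ s ^ 1 := pow_le_pow_of_le_one hs0 hs1.le (by omega)
          _ = s := pow_one s
      have ht1 : s ^ (m + 1) < 1 := lt_of_le_of_lt hts hs1
      have h1t : (0 : ℝ) < 1 - s ^ (m + 1) := by linarith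
      have h1s : (0 : ℝ) < 1 - s := by linarith
      have hlip : ∀ w : Fin (m + 1) → Fin (n + 1), ∀ p q : X,
          dist ((List.ofFn fun j => f (w j)).foldr (· ∘ ·) id p)
               ((List.ofFn fun j => f (w j)).foldr (· ∘ ·) id q)
            ≤ s ^ (m + 1) * dist p q := by
        intro w p q
        have h1 := foldr_lip hs0 (List.ofFn fun j => f (w j))
          (fun g hg p q => by
            obtain ⟨j, rfl⟩ := List.mem_ofFn.1 hg
            exact hfs _ p q) p q
        simpa [List.length_ofFn] using h1
      have hmapA : ∀ w : Fin (m + 1) → Fin (n + 1), ∀ x ∈ A,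
          (List.ofFn fun j => f (w j)).foldr (· ∘ ·) id x ∈ A := by
        intro w
        exact foldr_mem _ (fun g hg x hx => by
          obtain ⟨j, rfl⟩ := List.mem_ofFn.1 hg
          exact hfA _ x hx)
      have hγA : ∀ w, γ m w ∈ A := fun w =>
        fixedPoint_mem hAc ⟨a₀, ha₀⟩ ht0 ht1 (hlip w) (hmapA w) (hγ m w)
      have hMbdd : BddAbove (Set.range fun p :
          (Fin (m + 1) → Fin (n + 1)) × (Fin (m + 1) → Fin (n + 1)) =>
          dist (γ m p.1) (γ m p.2)) := Set.Finite.bddAbove (Set.finite_range _)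
      have hMd : ∀ w w', dist (γ m w) (γ m w') ≤ M m := by
        intro w w'; rw [hM]; exact le_ciSup hMbdd (w, w')
      have hM0 : 0 ≤ M m := le_trans dist_nonneg (hMd (fun _ => 0) (fun _ => 0))
      have hMdiam : M m ≤ Metric.diam A := by
        rw [hM]
        exact ciSup_le fun p => Metric.dist_le_diam_of_mem hAc.isBounded (hγA p.1) (hγA p.2)
      haveI : Nonempty A := ⟨⟨a₀, ha₀⟩⟩
      obtain ⟨D, hD⟩ : ∃ D : ℝ,
          D = ⨆ p : A × (Fin (m + 1) → Fin (n + 1)), dist (p.1 : X) (γ m p.2) := ⟨_, rfl⟩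
      have hDbdd : BddAbove (Set.range fun p : A × (Fin (m + 1) → Fin (n + 1)) =>
          dist (p.1 : X) (γ m p.2)) := by
        refine ⟨Metric.diam A, ?_⟩
        rintro x ⟨p, rfl⟩
        exact Metric.dist_le_diam_of_mem hAc.isBounded p.1.2 (hγA p.2)
      have hDle : ∀ a, a ∈ A → ∀ w, dist a (γ m w) ≤ D := fun a ha w => by
        rw [hD]; exact le_ciSup hDbdd (⟨a, ha⟩, w)
      have hD0 : 0 ≤ D := le_trans dist_nonneg (hDle a₀ ha₀ (fun _ => 0))
      have hkey : D ≤ M m + s ^ (m + 1) * D := by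
        conv_lhs => rw [hD]
        refine ciSup_le ?_
        rintro ⟨⟨a, ha⟩, w⟩
        obtain ⟨v, b, hb, hvb⟩ := exists_word f hAfix m a ha
        have h1 : dist a (γ m v) ≤ s ^ (m + 1) * D := by
          have h2 := hlip v b (γ m v)
          rw [hvb, hγ m v] at h2
          exact h2.trans (mul_le_mul_of_nonneg_left (hDle b hb v) ht0)
        show dist a (γ m w) ≤ M m + s ^ (m + 1) * D
        calc dist a (γ m w)
            ≤ dist a (γ m v) + dist (γ m v) (γ m w) := dist_triangle _ _ _
          _ ≤ s ^ (m + 1) * D + M m := add_le_add h1 (hMd v w)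
          _ = M m + s ^ (m + 1) * D := by ring
      have hDM : D ≤ M m / (1 - s ^ (m + 1)) := by
        rw [le_div_iff₀ h1t]; nlinarith
      have hradius : M m * s ^ (m + 1) * (1 + s ^ (m + 1)) / (1 - s ^ (2 * (m + 1)))
          = M m * s ^ (m + 1) / (1 - s ^ (m + 1)) := by
        have h2 : s ^ (2 * (m + 1)) = (s ^ (m + 1)) ^ 2 := by rw [mul_comm, pow_mul]
        rw [h2, show (1 : ℝ) - (s ^ (m + 1)) ^ 2
            = (1 - s ^ (m + 1)) * (1 + s ^ (m + 1)) by ring]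
        rw [show M m * s ^ (m + 1) * (1 + s ^ (m + 1))
            = (M m * s ^ (m + 1)) * (1 + s ^ (m + 1)) by ring]
        exact mul_div_mul_right _ _ (by linarith)
      have hC' : C m = ⋃ w, Metric.closedBall (γ m w)
          (M m * s ^ (m + 1) / (1 - s ^ (m + 1))) := by rw [hC, hradius]
      have hr0 : 0 ≤ M m * s ^ (m + 1) / (1 - s ^ (m + 1)) :=
        div_nonneg (mul_nonneg hM0 ht0) h1t.le
      have hsubset : A ⊆ C m := by
        intro a ha
        obtain ⟨v, b, hb, hvb⟩ := exists_word f hAfix m a ha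
        rw [hC']
        refine Set.mem_iUnion.2 ⟨v, ?_⟩
        rw [Metric.mem_closedBall]
        have h1 : dist a (γ m v) ≤ s ^ (m + 1) * D := by
          have h2 := hlip v b (γ m v)
          rw [hvb, hγ m v] at h2
          exact h2.trans (mul_le_mul_of_nonneg_left (hDle b hb v) ht0)
        calc dist a (γ m v) ≤ s ^ (m + 1) * D := h1
          _ ≤ s ^ (m + 1) * (M m / (1 - s ^ (m + 1))) :=
              mul_le_mul_of_nonneg_left hDM ht0
          _ = M m * s ^ (m + 1) / (1 - s ^ (m + 1)) := by ring
      refine ⟨hsubset, ?_⟩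
      have hhd : Metric.hausdorffDist (C m) A ≤ M m * s ^ (m + 1) / (1 - s ^ (m + 1)) := by
        refine Metric.hausdorffDist_le_of_mem_dist hr0 ?_ ?_
        · intro x hx
          rw [hC'] at hx
          obtain ⟨w, hw⟩ := Set.mem_iUnion.1 hx
          exact ⟨γ m w, hγA w, Metric.mem_closedBall.1 hw⟩
        · intro x hx
          exact ⟨x, hsubset hx, by simpa using hr0⟩
      refine hhd.trans ?_
      have h3 : M m * s ^ (m + 1) / (1 - s ^ (m + 1))
          ≤ Metric.diam A * s ^ (m + 1) / (1 - s) :=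
        div_le_div₀ (mul_nonneg Metric.diam_nonneg ht0)
          (mul_le_mul_of_nonneg_right hMdiam ht0) h1s (by linarith)
      calc M m * s ^ (m + 1) / (1 - s ^ (m + 1))
          ≤ Metric.diam A * s ^ (m + 1) / (1 - s) := h3
        _ = K * s ^ (m + 1) := by rw [hK]; ring
    refine ⟨fun m => (main m).1, ?_⟩
    apply squeeze_zero (fun m => Metric.hausdorffDist_nonneg) (fun m => (main m).2)
    have h1 : Filter.Tendsto (fun m : ℕ => s ^ m) Filter.atTop (nhds 0) :=
      tendsto_pow_atTop_nhds_zero_of_lt_one hs0 hs1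
    have h2 := (h1.const_mul K).comp (Filter.tendsto_add_atTop_nat 1)
    simpa [Function.comp_def] using h2
end
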